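/- arXiv:1905.04360 — 3 statements merged into one kernel-verified Lean document; each statement's English description precedes it below -/
import Mathlib

section
/- Fix p ∈ (0,1) and k ∈ ℕ. Let S be an n×n symmetric conference matrix, let X ∼ Sub(S,p), let N denote the (random) number of rows of X, and put Z := (1/(p√n)) X. Define V := (1/(pn)) tr(Z^k) and W := ∫_ℝ x^k dμ_Z(x) = (1/N) tr(Z^k) (with W := 0 when N = 0). Then there exists a constant c(p,k) > 0, depending only on p and k, such that |E V − E W| ≤ c(p,k)/√n and |Var(V) − Var(W)| ≤ c(p,k)/√n. -/
open MeasureTheory ProbabilityTheory Filter Finset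
open scoped ENNReal
open scoped Matrix

/-- An `n × n` symmetric conference matrix: symmetric, zero diagonal,
`±1` off the diagonal, and `Sᵀ S = (n-1) I`. -/
def IsConferenceMatrix {n : ℕ} (S : Matrix (Fin n) (Fin n) ℝ) : Prop :=
  S.IsSymm ∧ (∀ i, S i i = 0) ∧ (∀ i j, i ≠ j → S i j = 1 ∨ S i j = -1) ∧
    S.transpose * S = ((n : ℝ) - 1) • 1

/-- The product of `n` independent `Bernoulli(p)` coins: the law of the random
index set `𝓘 ⊆ [n]` in which each element is included independently with probability `p`. -/
noncomputable def bernoulliPi (n : ℕ) (p : ℝ≥0∞) (hp : p ≤ 1) :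
    Measure (Fin n → Bool) :=
  Measure.pi fun _ => (PMF.bernoulli p.toNNReal
    (by simpa using ENNReal.toNNReal_mono ENNReal.one_ne_top hp)).toMeasure

/-- The principal submatrix of `S` with rows and columns indexed by `{i | ω i = true}`. -/
def subMat {n : ℕ} (S : Matrix (Fin n) (Fin n) ℝ) (ω : Fin n → Bool) :
    Matrix {i : Fin n // ω i = true} {i : Fin n // ω i = true} ℝ :=
  S.submatrix Subtype.val Subtype.val

/-! ### Deterministic spectral lemmas -/

theorem trace_pow_eq {m : Type*} [Fintype m] [DecidableEq m] {A : Matrix m m ℝ}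
    (hA : A.IsHermitian) (k : ℕ) :
    (A ^ k).trace = ∑ i, hA.eigenvalues i ^ k := by
  set U : Matrix m m ℝ := (Matrix.IsHermitian.eigenvectorUnitary hA : Matrix m m ℝ) with hU
  set D : Matrix m m ℝ := Matrix.diagonal (RCLike.ofReal ∘ hA.eigenvalues) with hD
  have hUU : U * star U = 1 :=
    (Matrix.mem_unitaryGroup_iff).mp (Matrix.IsHermitian.eigenvectorUnitary hA).2
  have hUU' : star U * U = 1 :=
    (Matrix.mem_unitaryGroup_iff').mp (Matrix.IsHermitian.eigenvectorUnitary hA).2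
  have hpow : A ^ k = U * D ^ k * star U := by
    induction k with
    | zero => simpa using hUU.symm
    | succ k ih =>
      rw [pow_succ, ih, hA.spectral_theorem, Unitary.conjStarAlgAut_apply, ← hU, ← hD]
      have : U * D ^ k * star U * (U * D * star U)
          = U * D ^ k * (star U * U) * (D * star U) := by
        simp only [mul_assoc]
      rw [this, hUU', mul_one, pow_succ]
      simp only [mul_assoc]
  rw [hpow, Matrix.trace_mul_comm, ← mul_assoc, hUU', one_mul, hD,
    Matrix.diagonal_pow, Matrix.trace_diagonal]
  simp

theorem eig_sq_le {n : ℕ} {S : Matrix (Fin n) (Fin n) ℝ}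
    (hS : S.transpose * S = ((n : ℝ) - 1) • 1) (ω : Fin n → Bool)
    (hA : (subMat S ω).IsHermitian) (i : {i : Fin n // ω i = true}) :
    hA.eigenvalues i ^ 2 ≤ (n : ℝ) - 1 := by
  set v : {i : Fin n // ω i = true} → ℝ := ⇑(hA.eigenvectorBasis i) with hv
  have hev : subMat S ω *ᵥ v = hA.eigenvalues i • v := hA.mulVec_eigenvectorBasis i
  have hnorm : ∑ a : {i : Fin n // ω i = true}, v a ^ 2 = 1 := by
    have h1 : ‖hA.eigenvectorBasis i‖ = 1 := hA.eigenvectorBasis.orthonormal.1 i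
    have h2 := EuclideanSpace.norm_eq (hA.eigenvectorBasis i)
    rw [h1] at h2
    have h3 : ∑ a : {i : Fin n // ω i = true}, ‖(hA.eigenvectorBasis i) a‖ ^ 2 =
        ∑ a : {i : Fin n // ω i = true}, v a ^ 2 := by
      simp [hv, sq_abs, Real.norm_eq_abs]
    have h4 := Real.sq_sqrt
      (by positivity : (0:ℝ) ≤ ∑ a : {i : Fin n // ω i = true}, ‖(hA.eigenvectorBasis i) a‖ ^ 2)
    rw [← h2] at h4
    rw [← h3]
    simpa using h4.symm
  set w : Fin n → ℝ := fun j => if h : ω j = true then v ⟨j, h⟩ else 0 with hw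
  have hkey : ∀ a : {i : Fin n // ω i = true}, w a.val = v a := fun a => dif_pos a.2
  have hw0 : ∀ j ∉ univ.filter (fun j => ω j = true), w j = 0 := by
    intro j hj
    simp only [mem_filter, mem_univ, true_and] at hj
    exact dif_neg hj
  have hsub : ∀ (g : Fin n → ℝ), ∑ j ∈ univ.filter (fun j => ω j = true), g j =
      ∑ a : {i : Fin n // ω i = true}, g a.val :=
    fun g => Finset.sum_subtype (univ.filter (fun j => ω j = true)) (by simp) g
  have hww : w ⬝ᵥ w = 1 := by
    unfold dotProduct
    rw [← Finset.sum_subset (Finset.filter_subset (fun j => ω j = true) univ)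
      (fun j _ hj => by rw [hw0 j hj]; ring), hsub (fun j => w j * w j)]
    simp_rw [hkey]
    rw [← hnorm]
    exact Finset.sum_congr rfl (fun a _ => (sq (v a)).symm)
  have hSw : ∀ a : {i : Fin n // ω i = true}, (S *ᵥ w) a.val = (subMat S ω *ᵥ v) a := by
    intro a
    show (∑ j, S a.val j * w j) = ∑ b : {i : Fin n // ω i = true}, subMat S ω a b * v b
    rw [← Finset.sum_subset (Finset.filter_subset (fun j => ω j = true) univ)
      (fun j _ hj => by rw [hw0 j hj]; ring), hsub (fun j => S a.val j * w j)]
    exact Finset.sum_congr rfl (fun b _ => by rw [hkey b]; rfl)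
  have hle : ∑ a : {i : Fin n // ω i = true}, ((S *ᵥ w) a.val) ^ 2 ≤ ∑ j, ((S *ᵥ w) j) ^ 2 := by
    rw [← hsub (fun j => ((S *ᵥ w) j) ^ 2)]
    exact Finset.sum_le_sum_of_subset_of_nonneg (Finset.filter_subset _ _)
      (fun j _ _ => sq_nonneg _)
  have hdot : ∑ j, ((S *ᵥ w) j) ^ 2 = (n : ℝ) - 1 := by
    have h5 : (S *ᵥ w) ⬝ᵥ (S *ᵥ w) = w ⬝ᵥ ((S.transpose * S) *ᵥ w) := by
      rw [← Matrix.mulVec_mulVec, Matrix.dotProduct_mulVec w,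
        ← Matrix.mulVec_transpose S.transpose, Matrix.transpose_transpose]
    have h6 : (S *ᵥ w) ⬝ᵥ (S *ᵥ w) = ∑ j, ((S *ᵥ w) j) ^ 2 := by
      unfold dotProduct
      exact Finset.sum_congr rfl (fun j _ => (sq _).symm)
    rw [← h6, h5, hS, Matrix.smul_mulVec, Matrix.one_mulVec,
      dotProduct_smul, smul_eq_mul, hww, mul_one]
  calc hA.eigenvalues i ^ 2 = ∑ a : {i : Fin n // ω i = true}, (hA.eigenvalues i • v) a ^ 2 := by
        simp_rw [Pi.smul_apply, smul_eq_mul, mul_pow, ← Finset.mul_sum, hnorm, mul_one]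
    _ = ∑ a : {i : Fin n // ω i = true}, ((S *ᵥ w) a.val) ^ 2 := by
        rw [← hev]; exact Finset.sum_congr rfl (fun a _ => by rw [hSw a])
    _ ≤ ∑ j, ((S *ᵥ w) j) ^ 2 := hle
    _ = (n : ℝ) - 1 := hdot

theorem trace_bound {n : ℕ} (k : ℕ) {S : Matrix (Fin n) (Fin n) ℝ}
    (hsymm : S.IsSymm) (hS : S.transpose * S = ((n : ℝ) - 1) • 1) (ω : Fin n → Bool) :
    |Matrix.trace ((subMat S ω) ^ k)| ≤
      (Fintype.card {i : Fin n // ω i = true} : ℝ) * (Real.sqrt n) ^ k := by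
  have hA : (subMat S ω).IsHermitian := by
    rw [Matrix.IsHermitian, Matrix.conjTranspose_eq_transpose_of_trivial]
    exact hsymm.submatrix _
  rw [trace_pow_eq hA k]
  calc |∑ i, hA.eigenvalues i ^ k| ≤ ∑ i, |hA.eigenvalues i ^ k| :=
        Finset.abs_sum_le_sum_abs _ _
    _ ≤ ∑ _i : {i : Fin n // ω i = true}, (Real.sqrt n) ^ k := by
        apply Finset.sum_le_sum
        intro i _
        rw [abs_pow]
        apply pow_le_pow_left₀ (abs_nonneg _)
        have h1 : hA.eigenvalues i ^ 2 ≤ (n : ℝ) := by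
          have := eig_sq_le hS ω hA i
          linarith
        have h2 : |hA.eigenvalues i| = Real.sqrt (hA.eigenvalues i ^ 2) :=
          (Real.sqrt_sq_eq_abs _).symm
        rw [h2]
        exact Real.sqrt_le_sqrt h1
    _ = (Fintype.card {i : Fin n // ω i = true} : ℝ) * (Real.sqrt n) ^ k := by
        rw [Finset.sum_const, Finset.card_univ, nsmul_eq_mul]

/-! ### Bernoulli product measure computations -/

noncomputable def bmeas (p : ℝ) (hp1 : p ≤ 1) : Measure Bool :=
  (PMF.bernoulli (ENNReal.ofReal p).toNNReal
    (by simpa using ENNReal.toNNReal_mono ENNReal.one_ne_top (ENNReal.ofReal_le_one.mpr hp1))).toMeasure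

instance (p : ℝ) (hp1 : p ≤ 1) : IsProbabilityMeasure (bmeas p hp1) := by
  unfold bmeas; infer_instance

lemma bmeas_integral {p : ℝ} (hp0 : 0 ≤ p) (hp1 : p ≤ 1) (f : Bool → ℝ) :
    ∫ b, f b ∂(bmeas p hp1) = p * f true + (1 - p) * f false := by
  rw [integral_fintype Integrable.of_finite]
  have ht : (bmeas p hp1) {true} = ENNReal.ofReal p := by
    rw [bmeas, PMF.toMeasure_apply_singleton _ _ (measurableSet_singleton _)]
    rfl
  have hf : (bmeas p hp1) {false} = 1 - ENNReal.ofReal p := by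
    rw [bmeas, PMF.toMeasure_apply_singleton _ _ (measurableSet_singleton _)]
    show (((1 - (ENNReal.ofReal p).toNNReal : NNReal)) : ℝ≥0∞) = _
    rw [ENNReal.coe_sub, ENNReal.coe_one, ENNReal.coe_toNNReal ENNReal.ofReal_ne_top]
  have h1 : (bmeas p hp1).real {true} = p := by rw [Measure.real, ht, ENNReal.toReal_ofReal hp0]
  have h2 : (bmeas p hp1).real {false} = 1 - p := by
    rw [Measure.real, hf, ENNReal.toReal_sub_of_le (ENNReal.ofReal_le_one.mpr hp1) ENNReal.one_ne_top,
      ENNReal.toReal_one, ENNReal.toReal_ofReal hp0]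
  simp only [Fintype.sum_bool, h1, h2, smul_eq_mul]

lemma integral_prod_coords {n : ℕ} {p : ℝ} (hp1 : p ≤ 1) (f : Fin n → Bool → ℝ) :
    ∫ ω, ∏ i, f i (ω i) ∂(bernoulliPi n (ENNReal.ofReal p) (ENNReal.ofReal_le_one.mpr hp1)) =
      ∏ i, ∫ b, f i b ∂(bmeas p hp1) := by
  letI : MeasureSpace Bool := ⟨bmeas p hp1⟩
  haveI : IsProbabilityMeasure (volume : Measure Bool) :=
    inferInstanceAs (IsProbabilityMeasure (bmeas p hp1))
  have h : bernoulliPi n (ENNReal.ofReal p) (ENNReal.ofReal_le_one.mpr hp1) =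
      (volume : Measure (Fin n → Bool)) := rfl
  rw [h]
  exact MeasureTheory.integral_fintype_prod_eq_prod f

lemma int_B {n : ℕ} {p : ℝ} (hp0 : 0 ≤ p) (hp1 : p ≤ 1) (i : Fin n) :
    ∫ ω, (if ω i = true then (1:ℝ) else 0)
      ∂(bernoulliPi n (ENNReal.ofReal p) (ENNReal.ofReal_le_one.mpr hp1)) = p := by
  have h : ∀ ω : Fin n → Bool, (if ω i = true then (1:ℝ) else 0) =
      ∏ l, (fun l b => if l = i then (if b = true then (1:ℝ) else 0) else 1) l (ω l) := by
    intro ω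
    rw [Finset.prod_ite_eq' Finset.univ i (fun l => if ω l = true then (1:ℝ) else 0)]
    simp
  have key := integral_prod_coords hp1
    (fun l b => if l = i then (if b = true then (1:ℝ) else 0) else 1)
  have h2 : ∀ l : Fin n, (∫ b, (if l = i then (if b = true then (1:ℝ) else 0) else 1)
      ∂(bmeas p hp1)) = if l = i then p else 1 := by
    intro l
    rw [bmeas_integral hp0 hp1]
    by_cases hl : l = i <;> simp [hl]
  have hprod : (∏ l, ∫ b, (fun l b => if l = i then (if b = true then (1:ℝ) else 0) else 1) l b
      ∂(bmeas p hp1)) = p := by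
    rw [Finset.prod_congr rfl (fun l _ => h2 l),
      Finset.prod_ite_eq' Finset.univ i (fun _ => p)]
    simp
  rw [integral_congr_ae (ae_of_all _ h)]
  exact key.trans hprod

lemma int_BB {n : ℕ} {p : ℝ} (hp0 : 0 ≤ p) (hp1 : p ≤ 1) {i j : Fin n} (hij : i ≠ j) :
    ∫ ω, (if ω i = true then (1:ℝ) else 0) * (if ω j = true then (1:ℝ) else 0)
      ∂(bernoulliPi n (ENNReal.ofReal p) (ENNReal.ofReal_le_one.mpr hp1)) = p ^ 2 := by
  have h : ∀ ω : Fin n → Bool,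
      (if ω i = true then (1:ℝ) else 0) * (if ω j = true then (1:ℝ) else 0) =
      ∏ l, (fun l b => (if l = i then (if b = true then (1:ℝ) else 0) else 1) *
        (if l = j then (if b = true then (1:ℝ) else 0) else 1)) l (ω l) := by
    intro ω
    rw [Finset.prod_mul_distrib,
      Finset.prod_ite_eq' Finset.univ i (fun l => if ω l = true then (1:ℝ) else 0),
      Finset.prod_ite_eq' Finset.univ j (fun l => if ω l = true then (1:ℝ) else 0)]
    simp
  have key := integral_prod_coords hp1
    (fun l b => (if l = i then (if b = true then (1:ℝ) else 0) else 1) *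
      (if l = j then (if b = true then (1:ℝ) else 0) else 1))
  have h2 : ∀ l : Fin n, (∫ b, (if l = i then (if b = true then (1:ℝ) else 0) else 1) *
      (if l = j then (if b = true then (1:ℝ) else 0) else 1) ∂(bmeas p hp1)) =
      (if l = i then p else 1) * (if l = j then p else 1) := by
    intro l
    rw [bmeas_integral hp0 hp1]
    by_cases hli : l = i <;> by_cases hlj : l = j
    · exact absurd (hli.symm.trans hlj) hij
    all_goals simp [hli, hlj, hij, Ne.symm hij]
  have hprod : (∏ l, ∫ b, (fun l b => (if l = i then (if b = true then (1:ℝ) else 0) else 1) *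
      (if l = j then (if b = true then (1:ℝ) else 0) else 1)) l b ∂(bmeas p hp1)) = p ^ 2 := by
    rw [Finset.prod_congr rfl (fun l _ => h2 l), Finset.prod_mul_distrib,
      Finset.prod_ite_eq' Finset.univ i (fun _ => p),
      Finset.prod_ite_eq' Finset.univ j (fun _ => p)]
    simp [sq]
  rw [integral_congr_ae (ae_of_all _ h)]
  exact key.trans hprod

instance {n : ℕ} {p : ℝ≥0∞} {hp : p ≤ 1} : IsProbabilityMeasure (bernoulliPi n p hp) := by
  unfold bernoulliPi; infer_instance

lemma moment2 {n : ℕ} {p : ℝ} (hp0 : 0 ≤ p) (hp1 : p ≤ 1) :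
    ∫ ω, ((∑ i, if ω i = true then (1:ℝ) else 0) - p * n) ^ 2
      ∂(bernoulliPi n (ENNReal.ofReal p) (ENNReal.ofReal_le_one.mpr hp1)) =
      n * (p * (1 - p)) := by
  set μ := bernoulliPi n (ENNReal.ofReal p) (ENNReal.ofReal_le_one.mpr hp1) with hμ
  have hf : ∫ ω, (∑ i, if ω i = true then (1:ℝ) else 0) ∂μ = n * p := by
    rw [integral_finset_sum Finset.univ (fun i _ => Integrable.of_finite),
      Finset.sum_congr rfl (fun i (_ : i ∈ Finset.univ) => int_B hp0 hp1 i)]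
    simp [mul_comm]
  have hf2 : ∫ ω, (∑ i, if ω i = true then (1:ℝ) else 0) ^ 2 ∂μ =
      n * p + ((n:ℝ) ^ 2 - n) * p ^ 2 := by
    have expand : ∀ ω : Fin n → Bool, (∑ i, if ω i = true then (1:ℝ) else 0) ^ 2 =
        ∑ i, ∑ j, (if ω i = true then (1:ℝ) else 0) * (if ω j = true then (1:ℝ) else 0) := by
      intro ω; rw [sq, Finset.sum_mul_sum]
    rw [integral_congr_ae (ae_of_all _ expand),
      integral_finset_sum Finset.univ (fun i _ => Integrable.of_finite)]
    have hrow : ∀ i : Fin n, ∫ ω,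
        (∑ j, (if ω i = true then (1:ℝ) else 0) * (if ω j = true then (1:ℝ) else 0)) ∂μ =
        ∑ j, (if i = j then p else p ^ 2) := by
      intro i
      rw [integral_finset_sum Finset.univ (fun j _ => Integrable.of_finite)]
      refine Finset.sum_congr rfl fun j _ => ?_
      by_cases hij : i = j
      · subst hij
        have hsq : ∀ ω : Fin n → Bool,
            (if ω i = true then (1:ℝ) else 0) * (if ω i = true then (1:ℝ) else 0) =
            (if ω i = true then (1:ℝ) else 0) := by
          intro ω; by_cases h : ω i = true <;> simp [h]
        rw [integral_congr_ae (ae_of_all _ hsq), int_B hp0 hp1 i, if_pos rfl]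
      · rw [int_BB hp0 hp1 hij, if_neg hij]
    rw [Finset.sum_congr rfl (fun i (_ : i ∈ Finset.univ) => hrow i)]
    have hinner : ∀ i : Fin n, (∑ j, (if i = j then p else p ^ 2)) =
        p + ((n:ℝ) - 1) * p ^ 2 := by
      intro i
      have h1 : ∀ j : Fin n, (if i = j then p else p ^ 2) =
          p ^ 2 + (if i = j then p - p ^ 2 else 0) := by
        intro j; by_cases h : i = j <;> simp [h]
      simp_rw [h1]
      rw [Finset.sum_add_distrib, Finset.sum_const,
        Finset.sum_ite_eq Finset.univ i (fun _ => p - p ^ 2), if_pos (Finset.mem_univ i)]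
      simp [Finset.card_univ]
      ring
    rw [Finset.sum_congr rfl (fun i (_ : i ∈ Finset.univ) => hinner i), Finset.sum_const,
      Finset.card_univ]
    simp only [Fintype.card_fin, nsmul_eq_mul]
    ring
  have hexp : ∀ ω : Fin n → Bool, ((∑ i, if ω i = true then (1:ℝ) else 0) - p * n) ^ 2 =
      (∑ i, if ω i = true then (1:ℝ) else 0) ^ 2 -
        (2 * (p * n)) * (∑ i, if ω i = true then (1:ℝ) else 0) + (p * n) ^ 2 := by
    intro ω; ring
  rw [integral_congr_ae (ae_of_all _ hexp),
    integral_add Integrable.of_finite (integrable_const _),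
    integral_sub Integrable.of_finite Integrable.of_finite,
    MeasureTheory.integral_const_mul, hf, hf2, integral_const]
  simp only [probReal_univ, ENNReal.toReal_one, smul_eq_mul, one_mul]
  ring

/-! ### Generic finite-space probability estimates -/

lemma abs_int_le {Ω : Type*} [MeasurableSpace Ω] (μ : Measure Ω) (f : Ω → ℝ) :
    |∫ ω, f ω ∂μ| ≤ ∫ ω, |f ω| ∂μ := by
  simpa [Real.norm_eq_abs] using MeasureTheory.norm_integral_le_integral_norm (μ := μ) f

lemma cs_fin {Ω : Type*} [Fintype Ω] [MeasurableSpace Ω] [MeasurableSingletonClass Ω]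
    (μ : Measure Ω) [IsProbabilityMeasure μ] (g : Ω → ℝ) :
    (∫ ω, g ω ∂μ) ^ 2 ≤ ∫ ω, g ω ^ 2 ∂μ := by
  rw [integral_fintype Integrable.of_finite, integral_fintype Integrable.of_finite]
  set w := fun ω => μ.real {ω} with hwdef
  have hw : ∀ ω, 0 ≤ w ω := fun _ => ENNReal.toReal_nonneg
  have hw1 : ∑ ω, w ω = 1 := by
    have h := integral_fintype (μ := μ) (f := fun _ => (1:ℝ)) Integrable.of_finite
    rw [integral_const] at h
    simp only [probReal_univ, ENNReal.toReal_one, smul_eq_mul, mul_one, one_smul] at h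
    exact h.symm
  have key := Finset.sum_mul_sq_le_sq_mul_sq Finset.univ
    (fun ω => Real.sqrt (w ω)) (fun ω => Real.sqrt (w ω) * g ω)
  have h1 : ∀ ω : Ω, Real.sqrt (w ω) * (Real.sqrt (w ω) * g ω) = w ω * g ω := fun ω => by
    rw [← mul_assoc, Real.mul_self_sqrt (hw ω)]
  have h2 : ∀ ω : Ω, Real.sqrt (w ω) ^ 2 = w ω := fun ω => Real.sq_sqrt (hw ω)
  have h3 : ∀ ω : Ω, (Real.sqrt (w ω) * g ω) ^ 2 = w ω * g ω ^ 2 := fun ω => by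
    rw [mul_pow, h2]
  rw [Finset.sum_congr rfl (fun ω _ => h1 ω), Finset.sum_congr rfl (fun ω _ => h2 ω),
    Finset.sum_congr rfl (fun ω _ => h3 ω), hw1, one_mul] at key
  simpa [smul_eq_mul] using key

lemma prob_part {Ω : Type*} [Fintype Ω] [MeasurableSpace Ω] [MeasurableSingletonClass Ω]
    (μ : Measure Ω) [IsProbabilityMeasure μ] (V W g : Ω → ℝ) (M B : ℝ)
    (hB : 0 ≤ B) (hM : 0 ≤ M)
    (hV : ∀ ω, |V ω| ≤ M) (hW : ∀ ω, |W ω| ≤ M)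
    (hVW : ∀ ω, |V ω - W ω| ≤ g ω)
    (hg2 : ∫ ω, g ω ^ 2 ∂μ ≤ B ^ 2) :
    |(∫ ω, V ω ∂μ) - ∫ ω, W ω ∂μ| ≤ B ∧
      |ProbabilityTheory.variance V μ - ProbabilityTheory.variance W μ| ≤ 4 * M * B := by
  have hg0 : ∀ ω, 0 ≤ g ω := fun ω => (abs_nonneg _).trans (hVW ω)
  have hEg : ∫ ω, g ω ∂μ ≤ B := by
    have h := (cs_fin μ g).trans hg2
    have h3 : 0 ≤ ∫ ω, g ω ∂μ := integral_nonneg hg0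
    nlinarith [h, h3, hB]
  have hmean : |(∫ ω, V ω ∂μ) - ∫ ω, W ω ∂μ| ≤ B := by
    rw [← integral_sub Integrable.of_finite Integrable.of_finite]
    calc |∫ ω, (V ω - W ω) ∂μ| ≤ ∫ ω, |V ω - W ω| ∂μ := abs_int_le μ _
      _ ≤ ∫ ω, g ω ∂μ := integral_mono Integrable.of_finite Integrable.of_finite hVW
      _ ≤ B := hEg
  refine ⟨hmean, ?_⟩
  have hmem : ∀ (f : Ω → ℝ), MeasureTheory.MemLp f 2 μ := fun f =>
    (MeasureTheory.memLp_two_iff_integrable_sq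
      ((measurable_of_countable f).aestronglyMeasurable)).mpr Integrable.of_finite
  have hvar : ∀ (f : Ω → ℝ), ProbabilityTheory.variance f μ =
      (∫ ω, f ω ^ 2 ∂μ) - (∫ ω, f ω ∂μ) ^ 2 := fun f => by
    rw [ProbabilityTheory.variance_eq_sub (hmem f)]; rfl
  rw [hvar V, hvar W]
  have hintV : |∫ ω, V ω ∂μ| ≤ M := by
    calc |∫ ω, V ω ∂μ| ≤ ∫ ω, |V ω| ∂μ := abs_int_le μ _
      _ ≤ ∫ _ω, M ∂μ := integral_mono Integrable.of_finite Integrable.of_finite hV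
      _ = M := by rw [integral_const]; simp
  have hintW : |∫ ω, W ω ∂μ| ≤ M := by
    calc |∫ ω, W ω ∂μ| ≤ ∫ ω, |W ω| ∂μ := abs_int_le μ _
      _ ≤ ∫ _ω, M ∂μ := integral_mono Integrable.of_finite Integrable.of_finite hW
      _ = M := by rw [integral_const]; simp
  have hsq : |(∫ ω, V ω ^ 2 ∂μ) - ∫ ω, W ω ^ 2 ∂μ| ≤ 2 * M * B := by
    rw [← integral_sub Integrable.of_finite Integrable.of_finite]
    have hpt : ∀ ω, |V ω ^ 2 - W ω ^ 2| ≤ 2 * M * g ω := by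
      intro ω
      have he : V ω ^ 2 - W ω ^ 2 = (V ω - W ω) * (V ω + W ω) := by ring
      rw [he, abs_mul]
      have h4 : |V ω + W ω| ≤ 2 * M := (abs_add_le _ _).trans (by linarith [hV ω, hW ω])
      calc |V ω - W ω| * |V ω + W ω| ≤ g ω * (2 * M) :=
            mul_le_mul (hVW ω) h4 (abs_nonneg _) (hg0 ω)
        _ = 2 * M * g ω := by ring
    calc |∫ ω, (V ω ^ 2 - W ω ^ 2) ∂μ| ≤ ∫ ω, |V ω ^ 2 - W ω ^ 2| ∂μ := abs_int_le μ _
      _ ≤ ∫ ω, 2 * M * g ω ∂μ := integral_mono Integrable.of_finite Integrable.of_finite hpt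
      _ = 2 * M * ∫ ω, g ω ∂μ := MeasureTheory.integral_const_mul _ _
      _ ≤ 2 * M * B := by
          apply mul_le_mul_of_nonneg_left hEg
          positivity
  have hsq2 : |(∫ ω, V ω ∂μ) ^ 2 - (∫ ω, W ω ∂μ) ^ 2| ≤ 2 * M * B := by
    have he : (∫ ω, V ω ∂μ) ^ 2 - (∫ ω, W ω ∂μ) ^ 2 =
        ((∫ ω, V ω ∂μ) - (∫ ω, W ω ∂μ)) * ((∫ ω, V ω ∂μ) + (∫ ω, W ω ∂μ)) := by ring
    rw [he, abs_mul]
    have h4 : |(∫ ω, V ω ∂μ) + (∫ ω, W ω ∂μ)| ≤ 2 * M :=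
      (abs_add_le _ _).trans (by linarith [hintV, hintW])
    calc _ ≤ B * (2 * M) := mul_le_mul hmean h4 (abs_nonneg _) hB
      _ = 2 * M * B := by ring
  calc |(∫ ω, V ω ^ 2 ∂μ) - (∫ ω, V ω ∂μ) ^ 2 - ((∫ ω, W ω ^ 2 ∂μ) - (∫ ω, W ω ∂μ) ^ 2)|
      = |((∫ ω, V ω ^ 2 ∂μ) - ∫ ω, W ω ^ 2 ∂μ) - ((∫ ω, V ω ∂μ) ^ 2 - (∫ ω, W ω ∂μ) ^ 2)| := by
        ring_nf
    _ ≤ |(∫ ω, V ω ^ 2 ∂μ) - ∫ ω, W ω ^ 2 ∂μ| + |(∫ ω, V ω ∂μ) ^ 2 - (∫ ω, W ω ∂μ) ^ 2| :=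
        abs_sub _ _
    _ ≤ 2 * M * B + 2 * M * B := add_le_add hsq hsq2
    _ = 4 * M * B := by ring

/-- `V := (1/(pn)) tr(Z^k)` is a good proxy for the `k`-th moment
`W := (1/N) tr(Z^k)` of the empirical spectral distribution of `Z = (1/(p√n)) X`:
both the expectations and the variances differ by at most `c(p,k)/√n`. -/
theorem stmt3 (p : ℝ) (hp0 : 0 < p) (hp1 : p < 1) (k : ℕ) (hk : 0 < k) :
    ∃ c > (0 : ℝ), ∀ (n : ℕ) (S : Matrix (Fin n) (Fin n) ℝ),
      IsConferenceMatrix S →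
      let μ := bernoulliPi n (ENNReal.ofReal p) (ENNReal.ofReal_le_one.mpr hp1.le)
      let V := fun ω : Fin n → Bool =>
        (1 / (p * n)) * Matrix.trace (((1 / (p * Real.sqrt n)) • subMat S ω) ^ k)
      let W := fun ω : Fin n → Bool =>
        ((Fintype.card {i : Fin n // ω i = true} : ℝ))⁻¹ *
          Matrix.trace (((1 / (p * Real.sqrt n)) • subMat S ω) ^ k)
      |(∫ ω, V ω ∂μ) - ∫ ω, W ω ∂μ| ≤ c / Real.sqrt n ∧
      |variance V μ - variance W μ| ≤ c / Real.sqrt n := by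
  refine ⟨4 / p ^ (2 * k + 2), by positivity, ?_⟩
  intro n S hconf μ V W
  obtain ⟨hsymm, hdiag, hpm, hS⟩ := hconf
  have hpne : p ≠ 0 := ne_of_gt hp0
  by_cases hn : n = 0
  · subst hn
    have hVW : V = W := by
      funext ω
      haveI : IsEmpty {i : Fin 0 // ω i = true} := ⟨fun a => a.1.elim0⟩
      have htr : Matrix.trace (((1 / (p * Real.sqrt ((0:ℕ):ℝ))) • subMat S ω) ^ k) = 0 := by
        simp [Matrix.trace]
      simp only [V, W, htr, mul_zero]
    rw [hVW]
    simp
  · have hn1 : 1 ≤ n := Nat.one_le_iff_ne_zero.mpr hn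
    have hnr1 : (1:ℝ) ≤ (n:ℝ) := by exact_mod_cast hn1
    have hnr0 : (0:ℝ) < (n:ℝ) := by linarith
    have hnne : (n:ℝ) ≠ 0 := ne_of_gt hnr0
    have hsq0 : (0:ℝ) < Real.sqrt n := Real.sqrt_pos.mpr hnr0
    have hsne : Real.sqrt (n:ℝ) ≠ 0 := ne_of_gt hsq0
    set N : (Fin n → Bool) → ℝ :=
      fun ω => (Fintype.card {i : Fin n // ω i = true} : ℝ) with hN
    set T : (Fin n → Bool) → ℝ :=
      fun ω => Matrix.trace (((1 / (p * Real.sqrt n)) • subMat S ω) ^ k) with hT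
    have hNnn : ∀ ω, 0 ≤ N ω := fun ω => Nat.cast_nonneg _
    have hNle : ∀ ω, N ω ≤ (n:ℝ) := by
      intro ω
      have h := Fintype.card_subtype_le (fun i : Fin n => ω i = true)
      simp only [Fintype.card_fin] at h
      simp only [hN]
      exact_mod_cast h
    have hTb : ∀ ω, |T ω| ≤ N ω / p ^ k := by
      intro ω
      have h1 : T ω = (1 / (p * Real.sqrt n)) ^ k * Matrix.trace ((subMat S ω) ^ k) := by
        simp only [hT, smul_pow, Matrix.trace_smul, smul_eq_mul]
      rw [h1, abs_mul, abs_pow]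
      have hc0 : (0:ℝ) < 1 / (p * Real.sqrt n) := by positivity
      rw [abs_of_pos hc0]
      calc (1 / (p * Real.sqrt n)) ^ k * |Matrix.trace ((subMat S ω) ^ k)|
          ≤ (1 / (p * Real.sqrt n)) ^ k * (N ω * (Real.sqrt n) ^ k) :=
            mul_le_mul_of_nonneg_left (trace_bound k hsymm hS ω) (by positivity)
        _ = N ω * ((1 / (p * Real.sqrt n)) * Real.sqrt n) ^ k := by
            rw [mul_pow]; ring
        _ = N ω / p ^ k := by
            rw [show (1 / (p * Real.sqrt (n:ℝ))) * Real.sqrt (n:ℝ) = 1 / p by field_simp]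
            rw [div_pow, one_pow, div_eq_mul_inv, div_eq_mul_inv, one_mul]
    have hT0 : ∀ ω, N ω = 0 → T ω = 0 := by
      intro ω h0
      have h := hTb ω
      rw [h0, zero_div] at h
      exact abs_eq_zero.mp (le_antisymm h (abs_nonneg _))
    have hpk1 : (0:ℝ) < p ^ (k+1) := by positivity
    have hpk : (0:ℝ) < p ^ k := by positivity
    have hpkk : p ^ (k+1) ≤ p ^ k := pow_le_pow_of_le_one hp0.le hp1.le (Nat.le_succ k)
    set g : (Fin n → Bool) → ℝ := fun ω => |N ω - p * n| / (p ^ (k+1) * n) with hg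
    have hVf : ∀ ω, V ω = (1 / (p * n)) * T ω := fun ω => rfl
    have hWf : ∀ ω, W ω = (N ω)⁻¹ * T ω := fun ω => rfl
    have hVb : ∀ ω, |V ω| ≤ 1 / p ^ (k+1) := by
      intro ω
      rw [hVf, abs_mul, abs_of_pos (by positivity : (0:ℝ) < 1 / (p * n))]
      calc 1 / (p * n) * |T ω| ≤ 1 / (p * n) * (N ω / p ^ k) :=
            mul_le_mul_of_nonneg_left (hTb ω) (by positivity)
        _ ≤ 1 / (p * n) * ((n:ℝ) / p ^ k) := by gcongr; exact hNle ω
        _ = 1 / p ^ (k+1) := by rw [pow_succ]; field_simp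
    have hWb : ∀ ω, |W ω| ≤ 1 / p ^ (k+1) := by
      intro ω
      rcases eq_or_lt_of_le (hNnn ω) with h0 | hpos
      · rw [hWf, hT0 ω h0.symm, mul_zero, abs_zero]
        positivity
      · rw [hWf, abs_mul, abs_of_pos (inv_pos.mpr hpos)]
        calc (N ω)⁻¹ * |T ω| ≤ (N ω)⁻¹ * (N ω / p ^ k) :=
              mul_le_mul_of_nonneg_left (hTb ω) (by positivity)
          _ = 1 / p ^ k := by field_simp
          _ ≤ 1 / p ^ (k+1) := one_div_le_one_div_of_le hpk1 hpkk
    have hVWb : ∀ ω, |V ω - W ω| ≤ g ω := by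
      intro ω
      rcases eq_or_lt_of_le (hNnn ω) with h0 | hpos
      · rw [hVf, hWf, hT0 ω h0.symm, mul_zero, mul_zero, sub_self, abs_zero]
        positivity
      · have hNne : N ω ≠ 0 := ne_of_gt hpos
        have e : V ω - W ω = T ω * ((N ω - p * n) / ((p * n) * N ω)) := by
          rw [hVf, hWf]
          field_simp
        rw [e, abs_mul, abs_div, abs_of_pos (by positivity : (0:ℝ) < p * (n:ℝ) * N ω)]
        calc |T ω| * (|N ω - p * n| / (p * n * N ω))
            ≤ (N ω / p ^ k) * (|N ω - p * n| / (p * n * N ω)) :=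
              mul_le_mul_of_nonneg_right (hTb ω) (by positivity)
          _ = |N ω - p * n| / (p ^ (k+1) * n) := by
              rw [pow_succ]
              field_simp
    have hNsum : ∀ ω, N ω = ∑ i, (if ω i = true then (1:ℝ) else 0) := by
      intro ω
      simp [hN, Fintype.card_subtype, Finset.sum_boole]
    have hg2 : ∫ ω, g ω ^ 2
        ∂(bernoulliPi n (ENNReal.ofReal p) (ENNReal.ofReal_le_one.mpr hp1.le)) ≤
        (1 / (p ^ (k+1) * Real.sqrt n)) ^ 2 := by
      have hge : ∀ ω : Fin n → Bool, g ω ^ 2 =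
          ((∑ i, if ω i = true then (1:ℝ) else 0) - p * n) ^ 2 / (p ^ (k+1) * n) ^ 2 := by
        intro ω
        simp only [hg]
        rw [div_pow, sq_abs, hNsum ω]
      rw [integral_congr_ae (ae_of_all _ hge), integral_div, moment2 hp0.le hp1.le]
      rw [div_pow, one_pow, mul_pow, mul_pow, Real.sq_sqrt hnr0.le]
      rw [div_le_div_iff₀ (by positivity) (by positivity)]
      have hple : p * (1 - p) ≤ 1 := by nlinarith
      calc (n:ℝ) * (p * (1-p)) * ((p ^ (k+1)) ^ 2 * n) ≤
            (n:ℝ) * 1 * ((p ^ (k+1)) ^ 2 * n) := by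
            apply mul_le_mul_of_nonneg_right _ (by positivity)
            exact mul_le_mul_of_nonneg_left hple hnr0.le
        _ = 1 * ((p ^ (k+1)) ^ 2 * (n:ℝ) ^ 2) := by ring
    haveI hinst : IsProbabilityMeasure μ := inferInstanceAs
      (IsProbabilityMeasure (bernoulliPi n (ENNReal.ofReal p) (ENNReal.ofReal_le_one.mpr hp1.le)))
    have key := prob_part μ V W g (1 / p ^ (k+1)) (1 / (p ^ (k+1) * Real.sqrt n))
      (by positivity) (by positivity) hVb hWb hVWb hg2
    have hp2k : p ^ (2*k+2) ≤ p ^ (k+1) := pow_le_pow_of_le_one hp0.le hp1.le (by omega)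
    have hBc : 1 / (p ^ (k+1) * Real.sqrt n) ≤ (4 / p ^ (2*k+2)) / Real.sqrt n := by
      rw [div_div]
      exact div_le_div₀ (by norm_num) (by norm_num) (by positivity)
        (mul_le_mul_of_nonneg_right hp2k hsq0.le)
    have hvareq : 4 * (1 / p ^ (k+1)) * (1 / (p ^ (k+1) * Real.sqrt n)) =
        (4 / p ^ (2*k+2)) / Real.sqrt n := by
      rw [show 2*k+2 = (k+1)+(k+1) by ring, pow_add]
      field_simp
      ring
    exact ⟨key.1.trans hBc, hvareq ▸ key.2⟩
end

section
/- For every v ≥ 2 and every k ∈ ℕ, the k-th moment of the Kesten–McKay distribution with parameter v satisfies: ∫_ℝ x^k dμ_{KM(v)}(x) = Σ_{j=1}^{k/2} C(k/2 − 1, k/2 − j) v^j (v−1)^{k/2 − j} if k is even, and ∫_ℝ x^k dμ_{KM(v)}(x) = 0 if k is odd. -/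
open MeasureTheory Filter
open scoped ENNReal

/-- The Kesten–McKay distribution with parameter `v`. -/
noncomputable def kestenMcKay (v : ℝ) : Measure ℝ :=
  volume.withDensity fun x =>
    ENNReal.ofReal (if x ^ 2 ≤ 4 * (v - 1) then
      v * Real.sqrt (4 * (v - 1) - x ^ 2) / (2 * Real.pi * (v ^ 2 - x ^ 2)) else 0)

/-- Catalan's triangle `C(n,k) = (n+k)! (n-k+1) / (k! (n+1)!)`. -/
noncomputable def catalanTriangle (n k : ℕ) : ℝ :=
  (Nat.factorial (n + k) * (n - k + 1) : ℝ) / (Nat.factorial k * Nat.factorial (n + 1))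

open Real Set intervalIntegral

namespace KMaux

lemma fact_pos (m : ℕ) : (0:ℝ) < m.factorial := by exact_mod_cast m.factorial_pos

lemma catT_zero (n : ℕ) : catalanTriangle n 0 = 1 := by
  unfold catalanTriangle
  rw [Nat.factorial_succ]
  push_cast
  have := fact_pos n
  field_simp
  ring

lemma catT_top (n : ℕ) : catalanTriangle n (n+1) = 0 := by
  unfold catalanTriangle
  push_cast
  ring_nf

lemma catT_rec (n k : ℕ) :
    catalanTriangle (n+1) (k+1) = catalanTriangle (n+1) k + catalanTriangle n (k+1) := by
  unfold catalanTriangle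
  have h1 : ((n+1) + (k+1)) = (n + (k+1)) + 1 := by ring
  have h2 : ((n+1) + k) = (n + (k+1)) := by ring
  rw [h1, h2, Nat.factorial_succ (n + (k+1)), Nat.factorial_succ k, Nat.factorial_succ (n+1)]
  push_cast
  have f1 := fact_pos (n + (k+1))
  have f2 := fact_pos k
  have f3 := fact_pos (n+1)
  field_simp
  ring

lemma catT_diag_ratio (i : ℕ) :
    ((i:ℝ)+2) * catalanTriangle (i+1) (i+1) = (4*i+2) * catalanTriangle i i := by
  unfold catalanTriangle
  have h1 : ((i+1) + (i+1)) = (i + i) + 1 + 1 := by ring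
  rw [h1, Nat.factorial_succ ((i+i)+1), Nat.factorial_succ (i+i), Nat.factorial_succ i,
    Nat.factorial_succ (i+1)]
  push_cast
  have f1 := fact_pos (i+i)
  have f2 := fact_pos i
  have f3 := fact_pos (i+1)
  field_simp
  rw [Nat.factorial_succ i]
  push_cast
  ring

/-- the moment polynomial in `m`-indexed form -/
noncomputable def KMA (n : ℕ) (v : ℝ) : ℝ :=
  ∑ m ∈ Finset.range (n+1), catalanTriangle n m * v^(n+1-m) * (v-1)^m

lemma KMA_rec (n : ℕ) (v : ℝ) :
    KMA (n+1) v = v^2 * KMA n v - catalanTriangle (n+1) (n+1) * v * (v-1)^(n+2) := by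
  have hS : KMA (n+1) v
      = v^(n+2) + ∑ m ∈ Finset.range (n+1),
          catalanTriangle (n+1) (m+1) * v^(n+1-m) * (v-1)^(m+1) := by
    unfold KMA
    rw [Finset.sum_range_succ']
    have : ∀ m ∈ Finset.range (n+1),
        catalanTriangle (n+1) (m+1) * v^(n+1+1-(m+1)) * (v-1)^(m+1)
        = catalanTriangle (n+1) (m+1) * v^(n+1-m) * (v-1)^(m+1) := by
      intro m hm
      rw [show n+1+1-(m+1) = n+1-m from by omega]
    rw [Finset.sum_congr rfl this, catT_zero, Nat.sub_zero]
    ring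
  have hsplit : ∑ m ∈ Finset.range (n+1),
        catalanTriangle (n+1) (m+1) * v^(n+1-m) * (v-1)^(m+1)
      = (∑ m ∈ Finset.range (n+1), catalanTriangle (n+1) m * v^(n+1-m) * (v-1)^(m+1))
        + (∑ m ∈ Finset.range (n+1), catalanTriangle n (m+1) * v^(n+1-m) * (v-1)^(m+1)) := by
    rw [← Finset.sum_add_distrib]
    refine Finset.sum_congr rfl fun m hm => ?_
    rw [catT_rec n m]; ring
  have hZ : ∑ m ∈ Finset.range (n+1), catalanTriangle n (m+1) * v^(n+1-m) * (v-1)^(m+1)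
      = v * KMA n v - v^(n+2) := by
    rw [Finset.sum_range_succ, catT_top]
    unfold KMA
    rw [Finset.mul_sum,
      Finset.sum_range_succ' (fun m => v * (catalanTriangle n m * v^(n+1-m) * (v-1)^m)) n]
    have : ∀ m ∈ Finset.range n,
        v * (catalanTriangle n (m+1) * v^(n+1-(m+1)) * (v-1)^(m+1))
        = catalanTriangle n (m+1) * v^(n+1-m) * (v-1)^(m+1) := by
      intro m hm
      simp only [Finset.mem_range] at hm
      rw [show n+1-m = (n+1-(m+1))+1 by omega]
      ring
    rw [Finset.sum_congr rfl this, catT_zero, Nat.sub_zero]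
    ring
  have hW : v * (∑ m ∈ Finset.range (n+1), catalanTriangle (n+1) m * v^(n+1-m) * (v-1)^(m+1))
      = (v-1) * (KMA (n+1) v - catalanTriangle (n+1) (n+1) * v * (v-1)^(n+1)) := by
    unfold KMA
    rw [Finset.sum_range_succ (fun m => catalanTriangle (n+1) m * v^(n+1+1-m) * (v-1)^m) (n+1)]
    rw [show n+1+1-(n+1) = 1 by omega]
    rw [Finset.mul_sum]
    have : ∀ m ∈ Finset.range (n+1),
        v * (catalanTriangle (n+1) m * v^(n+1-m) * (v-1)^(m+1))
        = (v-1) * (catalanTriangle (n+1) m * v^(n+1+1-m) * (v-1)^m) := by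
      intro m hm
      simp only [Finset.mem_range] at hm
      rw [show n+1+1-m = (n+1-m)+1 by omega]
      ring
    rw [Finset.sum_congr rfl this, ← Finset.mul_sum]
    ring
  set S := KMA (n+1) v
  set W := ∑ m ∈ Finset.range (n+1), catalanTriangle (n+1) m * v^(n+1-m) * (v-1)^(m+1)
  set Z := ∑ m ∈ Finset.range (n+1), catalanTriangle n (m+1) * v^(n+1-m) * (v-1)^(m+1)
  have h1 : S = v^(n+2) + (W + Z) := by rw [hS, hsplit]
  linear_combination v * h1 + hW + v * hZ

lemma KMA_eq (n : ℕ) (v : ℝ) :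
    KMA n v = v^(2*n+2) - ∑ i ∈ Finset.range (n+1),
      catalanTriangle i i * (v-1)^(i+1) * v^(2*(n-i)+1) := by
  induction n with
  | zero => simp [KMA, catT_zero]; ring
  | succ n ih =>
      rw [KMA_rec, ih,
        Finset.sum_range_succ (fun i => catalanTriangle i i * (v-1)^(i+1) * v^(2*(n+1-i)+1)) (n+1),
        show 2*(n+1-(n+1))+1 = 1 from by omega]
      have : ∀ i ∈ Finset.range (n+1),
          catalanTriangle i i * (v-1)^(i+1) * v^(2*(n+1-i)+1)
          = v^2 * (catalanTriangle i i * (v-1)^(i+1) * v^(2*(n-i)+1)) := by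
        intro i hi
        simp only [Finset.mem_range] at hi
        rw [show 2*(n+1-i)+1 = (2*(n-i)+1)+2 by omega]
        ring
      rw [Finset.sum_congr rfl this, ← Finset.mul_sum]
      ring

lemma arcsin_comp_deriv {r : ℝ} (hr : 0 < r) (x : ℝ) (hx : x ∈ Ioo (-r) r) :
    HasDerivAt (fun y : ℝ => Real.arcsin (y/r)) (1/Real.sqrt (r^2-x^2)) x := by
  obtain ⟨h1, h2⟩ := hx
  have hx2 : x^2 < r^2 := sq_lt_sq' h1 h2
  have hsp : 0 < r^2 - x^2 := by linarith
  have hs0 : 0 < Real.sqrt (r^2-x^2) := Real.sqrt_pos.2 hsp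
  have hss : Real.sqrt (r^2-x^2)^2 = r^2 - x^2 := Real.sq_sqrt hsp.le
  have hne1 : x/r ≠ -1 := by intro h; rw [div_eq_iff hr.ne'] at h; linarith
  have hne2 : x/r ≠ 1 := by intro h; rw [div_eq_iff hr.ne'] at h; linarith
  have inner : HasDerivAt (fun y : ℝ => y/r) (1/r) x := by
    simpa [one_div] using (hasDerivAt_id x).div_const r
  have comp := (Real.hasDerivAt_arcsin hne1 hne2).comp x inner
  refine comp.congr_deriv (Eq.symm ?_)
  have hval : Real.sqrt (1 - (x/r)^2) = Real.sqrt (r^2-x^2)/r := by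
    rw [show 1 - (x/r)^2 = (Real.sqrt (r^2-x^2)/r)^2 by rw [div_pow, div_pow, hss]; field_simp]
    exact Real.sqrt_sq (by positivity)
  rw [hval]
  field_simp

lemma I_deriv {r b v : ℝ} (hr : 0 < r) (hv : 0 < v) (hv2 : v^2 = r^2 + b^2)
    (x : ℝ) (hx : x ∈ Ioo (-r) r) :
    HasDerivAt (fun y => Real.arcsin (y/r) - (b/v) * Real.arcsin (b*y/(r*Real.sqrt (v^2-y^2))))
      (Real.sqrt (r^2-x^2)/(v^2-x^2)) x := by
  obtain ⟨h1, h2⟩ := hx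
  have hx2 : x^2 < r^2 := sq_lt_sq' h1 h2
  have hsp : 0 < r^2 - x^2 := by linarith
  have htp : 0 < v^2 - x^2 := by nlinarith [sq_nonneg b]
  set s := Real.sqrt (r^2-x^2) with hs_def
  set t := Real.sqrt (v^2-x^2) with ht_def
  have hs0 : 0 < s := Real.sqrt_pos.2 hsp
  have ht0 : 0 < t := Real.sqrt_pos.2 htp
  have hss : s^2 = r^2 - x^2 := Real.sq_sqrt hsp.le
  have htt : t^2 = v^2 - x^2 := Real.sq_sqrt htp.le
  have hb2 : b^2 = v^2 - r^2 := by linarith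
  have D1 : HasDerivAt (fun y : ℝ => Real.arcsin (y/r)) (1/s) x :=
    arcsin_comp_deriv hr x ⟨h1, h2⟩
  have hu : HasDerivAt (fun y => b*y/(r*Real.sqrt (v^2-y^2))) (b*v^2/(r*t^3)) x := by
    have num : HasDerivAt (fun y : ℝ => b*y) b x := by
      simpa using (hasDerivAt_id x).const_mul b
    have densq : HasDerivAt (fun y : ℝ => v^2 - y^2) (-(2*x)) x := by
      exact ((hasDerivAt_const x (v^2)).sub (hasDerivAt_pow 2 x)).congr_deriv (by simp)
    have dsqrt : HasDerivAt (fun y : ℝ => Real.sqrt (v^2-y^2)) (-(2*x)/(2*t)) x :=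
      densq.sqrt htp.ne'
    have den : HasDerivAt (fun y : ℝ => r * Real.sqrt (v^2-y^2)) (r * (-(2*x)/(2*t))) x :=
      dsqrt.const_mul r
    have hden : r * Real.sqrt (v^2-x^2) ≠ 0 := by
      rw [← ht_def]; exact (mul_pos hr ht0).ne'
    have div := num.div den hden
    refine div.congr_deriv (Eq.symm ?_)
    rw [← ht_def, show v^2 = t^2 + x^2 by linarith]
    field_simp
    ring
  have key : r^2*t^2 - b^2*x^2 = v^2*s^2 := by
    linear_combination r^2*htt - v^2*hss - x^2*hb2
  have hwlt : (b*x/(r*t))^2 < 1 := by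
    have h3 : (b*x/(r*t))^2 = b^2*x^2/(r^2*t^2) := by ring
    rw [h3, div_lt_one (by positivity)]
    nlinarith [mul_pos (mul_pos hv hv) (mul_pos hs0 hs0)]
  have hwne1 : b*x/(r*t) ≠ -1 := by intro h; rw [h] at hwlt; norm_num at hwlt
  have hwne2 : b*x/(r*t) ≠ 1 := by intro h; rw [h] at hwlt; norm_num at hwlt
  have D2 : HasDerivAt (fun y => Real.arcsin (b*y/(r*Real.sqrt (v^2-y^2)))) (b*v/(t^2*s)) x := by
    have comp := (Real.hasDerivAt_arcsin hwne1 hwne2).comp x hu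
    refine comp.congr_deriv (Eq.symm ?_)
    have hval : Real.sqrt (1 - (b*x/(r*t))^2) = v*s/(r*t) := by
      rw [show 1 - (b*x/(r*t))^2 = (v*s/(r*t))^2 by
        rw [div_pow, div_pow, mul_pow, mul_pow, mul_pow,
          eq_div_iff (show r^2*t^2 ≠ 0 by positivity), sub_mul,
          div_mul_cancel₀ _ (show r^2*t^2 ≠ 0 by positivity)]
        linear_combination key]
      exact Real.sqrt_sq (by positivity)
    rw [hval]
    field_simp [hr.ne', hv.ne', ht0.ne', hs0.ne']
  have final := D1.sub (D2.const_mul (b/v))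
  refine final.congr_deriv (Eq.symm ?_)
  rw [← htt]
  have e1 : 1/s - b/v*(b*v/(t^2*s)) = (t^2 - b^2)/(t^2*s) := by
    field_simp
  rw [e1, show t^2 - b^2 = s^2 by linarith]
  rw [div_eq_div_iff (by positivity) (by positivity)]
  ring

lemma I_cont {r b v : ℝ} (hr : 0 < r) (hb : 0 ≤ b) (hv : 0 < v) (hv2 : v^2 = r^2 + b^2) :
    ContinuousOn (fun y => Real.arcsin (y/r) - (b/v) * Real.arcsin (b*y/(r*Real.sqrt (v^2-y^2))))
      (Icc (-r) r) := by
  rcases eq_or_lt_of_le hb with hb0 | hb0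
  · have : (fun y => Real.arcsin (y/r) - (b/v) * Real.arcsin (b*y/(r*Real.sqrt (v^2-y^2))))
        = fun y => Real.arcsin (y/r) := by
      funext y; rw [← hb0]; simp
    rw [this]
    exact (Real.continuous_arcsin.comp (continuous_id.div_const r)).continuousOn
  · have hrv : r < v := by nlinarith
    have hne : ∀ y ∈ Icc (-r) r, r * Real.sqrt (v^2-y^2) ≠ 0 := by
      intro y hy
      have : y^2 ≤ r^2 := sq_le_sq' hy.1 hy.2
      have : 0 < v^2 - y^2 := by nlinarith
      positivity
    have c1 : ContinuousOn (fun y : ℝ => b*y/(r*Real.sqrt (v^2-y^2))) (Icc (-r) r) :=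
      ContinuousOn.div (by fun_prop) (by fun_prop) hne
    exact ((Real.continuous_arcsin.comp (continuous_id.div_const r)).continuousOn).sub
      (continuousOn_const.mul (Real.continuous_arcsin.comp_continuousOn c1))

lemma I_endpoint {r b v : ℝ} (hr : 0 < r) (hb : 0 ≤ b) (hv : 0 < v) (hv2 : v^2 = r^2 + b^2) :
    Real.arcsin (r/r) - (b/v) * Real.arcsin (b*r/(r*Real.sqrt (v^2-r^2))) = π*(v-b)/(2*v) ∧
    Real.arcsin (-r/r) - (b/v) * Real.arcsin (b*-r/(r*Real.sqrt (v^2-(-r)^2)))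
      = -(π*(v-b)/(2*v)) := by
  have hsq : Real.sqrt (v^2 - r^2) = b := by
    rw [show v^2 - r^2 = b^2 by linarith]; exact Real.sqrt_sq hb
  have hsq' : Real.sqrt (v^2 - (-r)^2) = b := by rw [neg_sq]; exact hsq
  have hrr : r/r = 1 := div_self hr.ne'
  rcases eq_or_lt_of_le hb with hb0 | hb0
  · constructor
    · simp only [hsq, hrr, ← hb0]
      rw [Real.arcsin_one]; field_simp; ring
    · simp only [hsq', ← hb0]
      rw [neg_div, hrr, Real.arcsin_neg, Real.arcsin_one]; field_simp; ring
  · have harg : b*r/(r*b) = 1 := by rw [mul_comm b r]; exact div_self (by positivity)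
    constructor
    · simp only [hsq, hrr]
      rw [harg, Real.arcsin_one]; field_simp
    · simp only [hsq']
      rw [neg_div, hrr, show b*(-r) = -(b*r) by ring, neg_div, harg,
        Real.arcsin_neg, Real.arcsin_one]
      field_simp; ring

lemma I_integrable {r b v : ℝ} (hr : 0 < r) (hb : 0 ≤ b) (hv : 0 < v) (hv2 : v^2 = r^2 + b^2) :
    IntervalIntegrable (fun y => Real.sqrt (r^2-y^2)/(v^2-y^2)) volume (-r) r := by
  have hle : -r ≤ r := by linarith
  apply intervalIntegral.intervalIntegrable_deriv_of_nonneg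
    (g := fun y => Real.arcsin (y/r) - (b/v) * Real.arcsin (b*y/(r*Real.sqrt (v^2-y^2))))
  · rw [uIcc_of_le hle]; exact I_cont hr hb hv hv2
  · rw [min_eq_left hle, max_eq_right hle]
    exact fun x hx => I_deriv hr hv hv2 x hx
  · rw [min_eq_left hle, max_eq_right hle]
    intro x hx
    have hx2 : x^2 < r^2 := sq_lt_sq' hx.1 hx.2
    have : 0 < v^2 - x^2 := by nlinarith [sq_nonneg b]
    positivity

lemma I_integral {r b v : ℝ} (hr : 0 < r) (hb : 0 ≤ b) (hv : 0 < v) (hv2 : v^2 = r^2 + b^2) :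
    (∫ y in (-r)..r, Real.sqrt (r^2-y^2)/(v^2-y^2)) = π*(v-b)/v := by
  have hle : -r ≤ r := by linarith
  rw [intervalIntegral.integral_eq_sub_of_hasDeriv_right_of_le hle (I_cont hr hb hv hv2)
    (fun x hx => (I_deriv hr hv hv2 x hx).hasDerivWithinAt) (I_integrable hr hb hv hv2)]
  rw [(I_endpoint hr hb hv hv2).1, (I_endpoint hr hb hv hv2).2]
  field_simp
  ring

lemma sc_zero {r : ℝ} (hr : 0 < r) :
    ∫ y in (-r)..r, Real.sqrt (r^2-y^2) = π * r^2 / 2 := by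
  have hle : -r ≤ r := by linarith
  have hcont : ContinuousOn
      (fun y : ℝ => (r^2 * Real.arcsin (y/r) + y * Real.sqrt (r^2-y^2))/2) (Icc (-r) r) := by
    apply Continuous.continuousOn
    exact ((continuous_const.mul (Real.continuous_arcsin.comp
      (continuous_id.div_const r))).add (continuous_id.mul (by fun_prop))).div_const 2
  have hderiv : ∀ x ∈ Ioo (-r) r,
      HasDerivAt (fun y : ℝ => (r^2 * Real.arcsin (y/r) + y * Real.sqrt (r^2-y^2))/2)
        (Real.sqrt (r^2-x^2)) x := by
    intro x hx
    obtain ⟨h1, h2⟩ := hx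
    have hx2 : x^2 < r^2 := sq_lt_sq' h1 h2
    have hsp : 0 < r^2 - x^2 := by linarith
    have hs0 : 0 < Real.sqrt (r^2-x^2) := Real.sqrt_pos.2 hsp
    have hss : Real.sqrt (r^2-x^2)^2 = r^2 - x^2 := Real.sq_sqrt hsp.le
    have d1 := (arcsin_comp_deriv hr x ⟨h1, h2⟩).const_mul (r^2)
    have densq : HasDerivAt (fun y : ℝ => r^2 - y^2) (-(2*x)) x := by
      exact ((hasDerivAt_const x (r^2)).sub (hasDerivAt_pow 2 x)).congr_deriv (by simp)
    have dsqrt : HasDerivAt (fun y : ℝ => Real.sqrt (r^2-y^2)) (-(2*x)/(2*Real.sqrt (r^2-x^2))) x :=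
      densq.sqrt hsp.ne'
    have d2 := (hasDerivAt_id x).mul dsqrt
    have sum := (d1.add d2).div_const 2
    refine sum.congr_deriv (Eq.symm ?_)
    simp only [id_eq]
    set u := Real.sqrt (r^2-x^2) with hu_def
    rw [show r^2 = u^2 + x^2 by linarith]
    field_simp
    ring
  have hint : IntervalIntegrable (fun y : ℝ => Real.sqrt (r^2-y^2)) volume (-r) r := by
    apply Continuous.intervalIntegrable; fun_prop
  rw [intervalIntegral.integral_eq_sub_of_hasDeriv_right_of_le hle hcont
    (fun x hx => (hderiv x hx).hasDerivWithinAt) hint]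
  rw [neg_div, div_self hr.ne', Real.arcsin_neg, Real.arcsin_one, neg_sq, sub_self,
    Real.sqrt_zero]
  ring

lemma sc_rec {r : ℝ} (hr : 0 < r) (i : ℕ) :
    (2*(i:ℝ)+4) * ∫ y in (-r)..r, y^(2*i+2) * Real.sqrt (r^2-y^2)
      = (2*(i:ℝ)+1) * r^2 * ∫ y in (-r)..r, y^(2*i) * Real.sqrt (r^2-y^2) := by
  have hle : -r ≤ r := by linarith
  set F := fun y : ℝ => y^(2*i+1) * ((r^2 - y^2) * Real.sqrt (r^2-y^2))
  have hcont : ContinuousOn F (Icc (-r) r) := by apply Continuous.continuousOn; fun_prop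
  have hderiv : ∀ x ∈ Ioo (-r) r, HasDerivAt F
      ((2*(i:ℝ)+1)*r^2*x^(2*i)*Real.sqrt (r^2-x^2)
        - (2*(i:ℝ)+4)*x^(2*i+2)*Real.sqrt (r^2-x^2)) x := by
    intro x hx
    obtain ⟨h1, h2⟩ := hx
    have hx2 : x^2 < r^2 := sq_lt_sq' h1 h2
    have hsp : 0 < r^2 - x^2 := by linarith
    have hs0 : 0 < Real.sqrt (r^2-x^2) := Real.sqrt_pos.2 hsp
    have hss : Real.sqrt (r^2-x^2)^2 = r^2 - x^2 := Real.sq_sqrt hsp.le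
    have dpow : HasDerivAt (fun y : ℝ => y^(2*i+1)) ((2*(i:ℝ)+1) * x^(2*i)) x := by
      have := hasDerivAt_pow (2*i+1) x
      simpa [Nat.add_sub_cancel] using this
    have densq : HasDerivAt (fun y : ℝ => r^2 - y^2) (-(2*x)) x := by
      exact ((hasDerivAt_const x (r^2)).sub (hasDerivAt_pow 2 x)).congr_deriv (by simp)
    have dsqrt : HasDerivAt (fun y : ℝ => Real.sqrt (r^2-y^2)) (-(2*x)/(2*Real.sqrt (r^2-x^2))) x :=
      densq.sqrt hsp.ne'
    have dprod := densq.mul dsqrt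
    have dF := dpow.mul dprod
    refine dF.congr_deriv (Eq.symm ?_)
    simp only [Pi.mul_apply]
    set u := Real.sqrt (r^2-x^2) with hu_def
    rw [show r^2 = u^2 + x^2 by linarith]
    field_simp
    ring
  have hint : IntervalIntegrable (fun x => (2*(i:ℝ)+1)*r^2*x^(2*i)*Real.sqrt (r^2-x^2)
      - (2*(i:ℝ)+4)*x^(2*i+2)*Real.sqrt (r^2-x^2)) volume (-r) r := by
    apply Continuous.intervalIntegrable; fun_prop
  have hFr : F r = 0 := by simp [F]
  have hFmr : F (-r) = 0 := by simp [F]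
  have key := intervalIntegral.integral_eq_sub_of_hasDeriv_right_of_le hle hcont
    (fun x hx => (hderiv x hx).hasDerivWithinAt) hint
  rw [hFr, hFmr, sub_zero] at key
  have i1 : IntervalIntegrable (fun y : ℝ => y^(2*i) * Real.sqrt (r^2-y^2)) volume (-r) r := by
    apply Continuous.intervalIntegrable; fun_prop
  have i2 : IntervalIntegrable (fun y : ℝ => y^(2*i+2) * Real.sqrt (r^2-y^2)) volume (-r) r := by
    apply Continuous.intervalIntegrable; fun_prop
  have split : (0:ℝ) = (2*(i:ℝ)+1)*r^2 * (∫ y in (-r)..r, y^(2*i) * Real.sqrt (r^2-y^2))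
      - (2*(i:ℝ)+4) * ∫ y in (-r)..r, y^(2*i+2) * Real.sqrt (r^2-y^2) := by
    rw [← intervalIntegral.integral_const_mul, ← intervalIntegral.integral_const_mul,
      ← intervalIntegral.integral_sub (i1.const_mul _) (i2.const_mul _)]
    rw [← key]
    congr 1
    funext y
    ring
  linarith [split]

lemma sc_moment {r : ℝ} (hr : 0 < r) (i : ℕ) :
    ∫ y in (-r)..r, y^(2*i) * Real.sqrt (r^2-y^2)
      = 2*π*catalanTriangle i i * (r^2/4)^(i+1) := by
  induction i with
  | zero =>
      simp only [Nat.mul_zero, pow_zero, one_mul, catT_zero, zero_add, pow_one, mul_one]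
      rw [sc_zero hr]
      ring
  | succ i ih =>
      have key := sc_rec hr i
      rw [ih] at key
      have h24 : (2*(i:ℝ)+4) ≠ 0 := by positivity
      have e : 2*(i+1) = 2*i+2 := by ring
      rw [e]
      have hX : ∫ y in (-r)..r, y^(2*i+2) * Real.sqrt (r^2-y^2)
          = (2*(i:ℝ)+1) * r^2 * (2*π*catalanTriangle i i * (r^2/4)^(i+1)) / (2*(i:ℝ)+4) := by
        rw [eq_div_iff h24]; linarith [key]
      rw [hX]
      have hT : catalanTriangle (i+1) (i+1)
          = (4*(i:ℝ)+2) * catalanTriangle i i / ((i:ℝ)+2) := by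
        rw [eq_div_iff (by positivity : ((i:ℝ)+2) ≠ 0)]
        linarith [catT_diag_ratio i]
      rw [hT, pow_succ _ (i+1)]
      field_simp
      ring

end KMaux

open KMaux

set_option maxHeartbeats 1000000 in
/-- **Kesten–McKay moments.** For `v ≥ 2` and `k ≥ 1`, the `k`-th moment of
the Kesten–McKay distribution is `Σ_{j=1}^{k/2} C(k/2-1, k/2-j) v^j (v-1)^{k/2-j}` when `k`
is even, and `0` when `k` is odd. -/
theorem stmt4 (v : ℝ) (hv : 2 ≤ v) (k : ℕ) (hk : 0 < k) :
    ∫ x, x ^ k ∂(kestenMcKay v) =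
      if Even k then
        ∑ j ∈ Finset.Icc 1 (k / 2),
          catalanTriangle (k / 2 - 1) (k / 2 - j) * v ^ j * (v - 1) ^ (k / 2 - j)
      else 0 := by
  have hv0 : (0:ℝ) < v := by linarith
  have hπ : (0:ℝ) < π := Real.pi_pos
  set g : ℝ → ℝ := fun x =>
    (if x^2 ≤ 4*(v-1) then v*Real.sqrt (4*(v-1)-x^2)/(2*π*(v^2-x^2)) else 0) with hg_def
  have hvsq : ∀ x : ℝ, x^2 ≤ 4*(v-1) → x^2 ≤ v^2 := by
    intro x h; nlinarith
  have hg_nonneg : ∀ x, 0 ≤ g x := by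
    intro x
    rw [hg_def]
    dsimp only
    split_ifs with h
    · apply div_nonneg (by positivity)
      have := hvsq x h
      nlinarith
    · exact le_refl _
  have step1 : ∫ x, x ^ k ∂(kestenMcKay v) = ∫ x, g x * x^k := by
    rw [kestenMcKay]
    rw [show (fun x => ENNReal.ofReal (if x ^ 2 ≤ 4 * (v - 1) then
        v * Real.sqrt (4 * (v - 1) - x ^ 2) / (2 * Real.pi * (v ^ 2 - x ^ 2)) else 0))
      = (fun x => ((fun y => (g y).toNNReal) x : ℝ≥0∞)) from rfl]
    rw [integral_withDensity_eq_integral_smul ?_ (fun x : ℝ => x^k)]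
    · congr 1
      funext x
      rw [NNReal.smul_def, Real.coe_toNNReal _ (hg_nonneg x), smul_eq_mul]
    · apply Measurable.real_toNNReal
      apply Measurable.ite (measurableSet_le (by fun_prop) measurable_const) ?_ measurable_const
      fun_prop
  rcases Nat.even_or_odd k with hke | hko
  swap
  · -- odd case
    rw [if_neg (Nat.not_even_iff_odd.mpr hko), step1]
    have hgev : ∀ x : ℝ, g (-x) = g x := by
      intro x
      rw [hg_def]
      simp only [neg_sq]
    have hodd : ∀ x : ℝ, g (-x) * (-x)^k = -(g x * x^k) := by
      intro x
      rw [hgev x, hko.neg_pow]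
      ring
    have hcomp : ∫ x : ℝ, g (-x) * (-x)^k = ∫ x : ℝ, g x * x^k :=
      (Measure.measurePreserving_neg (volume : Measure ℝ)).integral_comp
        (MeasurableEquiv.neg ℝ).measurableEmbedding (fun x => g x * x^k)
    have h3 : ∫ x : ℝ, g (-x) * (-x)^k = - ∫ x : ℝ, g x * x^k := by
      simp only [hodd]
      exact integral_neg _
    rw [h3] at hcomp
    linarith
  · -- even case
    rw [if_pos hke, step1]
    obtain ⟨m, hm⟩ := hke
    obtain ⟨n, hn2⟩ : ∃ n, k = 2*n := ⟨m, by omega⟩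
    have hn2' : k / 2 = n := by omega
    have hn1 : 1 ≤ n := by omega
    rw [hn2']
    have hv1 : (0:ℝ) ≤ v - 1 := by linarith
    have hsq : Real.sqrt (v-1) ^ 2 = v - 1 := Real.sq_sqrt hv1
    have hsr : (1:ℝ) ≤ Real.sqrt (v-1) := by
      nlinarith [Real.sqrt_nonneg (v-1), hsq]
    set r := 2*Real.sqrt (v-1) with hr_def
    have hr0 : 0 < r := by rw [hr_def]; linarith
    have hr2 : r^2 = 4*(v-1) := by rw [hr_def, mul_pow, hsq]; ring
    set b := v - 2 with hb_def
    have hb0 : 0 ≤ b := by rw [hb_def]; linarith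
    have hv2 : v^2 = r^2 + b^2 := by rw [hr2, hb_def]; ring
    -- restrict to Ioo
    have hsupp : ∀ x, x ∉ Ioo (-r) r → g x * x^k = 0 := by
      intro x hx
      rw [hg_def]
      dsimp only
      split_ifs with h
      · have hxr : ¬ |x| < r := fun hc => hx (abs_lt.mp hc |> fun ⟨a1, a2⟩ => ⟨a1, a2⟩)
        have hx2 : x^2 = 4*(v-1) := by
          have h2 : r ≤ |x| := not_lt.mp hxr
          have := sq_abs x
          nlinarith [abs_nonneg x]
        rw [hx2, sub_self, Real.sqrt_zero, mul_zero, zero_div, zero_mul]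
      · exact zero_mul _
    have step2 : ∫ x, g x * x^k = ∫ x in Ioo (-r) r, g x * x^k :=
      (setIntegral_eq_integral_of_forall_compl_eq_zero hsupp).symm
    -- pointwise identity on Ioo
    have hpt : ∀ x ∈ Ioo (-r) r, g x * x^k =
        v^(2*n) * (v/(2*π)) * (Real.sqrt (r^2-x^2)/(v^2-x^2))
        - (v/(2*π)) * (Real.sqrt (r^2-x^2) *
            ∑ i ∈ Finset.range n, (x^2)^i * (v^2)^(n-1-i)) := by
      intro x hx
      obtain ⟨h1, h2⟩ := hx
      have hx2 : x^2 < r^2 := sq_lt_sq' h1 h2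
      have hle : x^2 ≤ 4*(v-1) := by rw [← hr2]; linarith
      have hne : 0 < v^2 - x^2 := by nlinarith [sq_nonneg b]
      rw [hg_def]
      dsimp only
      rw [if_pos hle]
      have hgeom := geom_sum₂_mul (x^2) (v^2) n
      have hxk : x^k = (x^2)^n := by rw [hn2, pow_mul]
      have hvk : v^(2*n) = (v^2)^n := by rw [pow_mul]
      have h44 : 4*(v-1) - x^2 = r^2 - x^2 := by rw [hr2]
      rw [h44, hxk, hvk]
      set S := ∑ i ∈ Finset.range n, (x^2)^i * (v^2)^(n-1-i)
      have hSn : (x^2)^n = (v^2)^n + S*(x^2-v^2) := by linarith [hgeom]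
      rw [hSn]
      field_simp
      ring
    rw [step2, setIntegral_congr_fun measurableSet_Ioo hpt]
    -- integrability on Ioo
    have if1 : IntegrableOn (fun x => Real.sqrt (r^2-x^2)/(v^2-x^2)) (Ioo (-r) r) :=
      (intervalIntegrable_iff_integrableOn_Ioo_of_le (by linarith)).mp
        (I_integrable hr0 hb0 hv0 hv2)
    have if2 : IntegrableOn (fun x => Real.sqrt (r^2-x^2) *
        ∑ i ∈ Finset.range n, (x^2)^i * (v^2)^(n-1-i)) (Ioo (-r) r) := by
      have c : Continuous (fun x : ℝ => Real.sqrt (r^2-x^2) *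
          ∑ i ∈ Finset.range n, (x^2)^i * (v^2)^(n-1-i)) := by fun_prop
      exact c.integrableOn_Icc.mono_set Ioo_subset_Icc_self
    -- split the integral
    rw [integral_sub ((if1.const_mul _)) (if2.const_mul _), MeasureTheory.integral_const_mul,
      MeasureTheory.integral_const_mul]
    -- first integral
    have e1 : ∫ x in Ioo (-r) r, Real.sqrt (r^2-x^2)/(v^2-x^2) = 2*π/v := by
      rw [← integral_Ioc_eq_integral_Ioo, ← intervalIntegral.integral_of_le (by linarith),
        I_integral hr0 hb0 hv0 hv2, hb_def]
      field_simp
      ring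
    rw [e1]
    -- second integral: push sum out
    have e2 : ∫ x in Ioo (-r) r, Real.sqrt (r^2-x^2) *
        ∑ i ∈ Finset.range n, (x^2)^i * (v^2)^(n-1-i)
        = ∑ i ∈ Finset.range n, (v^2)^(n-1-i) * (2*π*catalanTriangle i i * (v-1)^(i+1)) := by
      have hint : ∀ i ∈ Finset.range n, IntegrableOn
          (fun x => (v^2)^(n-1-i) * ((x^2)^i * Real.sqrt (r^2-x^2))) (Ioo (-r) r) := by
        intro i _
        have c : Continuous (fun x : ℝ => (v^2)^(n-1-i) *
            ((x^2)^i * Real.sqrt (r^2-x^2))) := by fun_prop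
        exact c.integrableOn_Icc.mono_set Ioo_subset_Icc_self
      rw [show (fun x => Real.sqrt (r^2-x^2) * ∑ i ∈ Finset.range n, (x^2)^i * (v^2)^(n-1-i))
          = (fun x => ∑ i ∈ Finset.range n, (v^2)^(n-1-i) * ((x^2)^i * Real.sqrt (r^2-x^2)))
          from by funext x; rw [Finset.mul_sum]; exact Finset.sum_congr rfl fun i _ => by ring]
      rw [integral_finset_sum _ hint]
      refine Finset.sum_congr rfl fun i _ => ?_
      rw [MeasureTheory.integral_const_mul]
      congr 1
      have : ∫ x in Ioo (-r) r, (x^2)^i * Real.sqrt (r^2-x^2)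
          = ∫ x in (-r)..r, x^(2*i) * Real.sqrt (r^2-x^2) := by
        rw [← integral_Ioc_eq_integral_Ioo, ← intervalIntegral.integral_of_le (by linarith)]
        congr 1
        funext x
        rw [pow_mul]
      rw [this, sc_moment hr0 i, hr2]
      norm_num
    rw [e2]
    -- now pure algebra
    have halg : v^(2*n) * (v/(2*π)) * (2*π/v)
        - (v/(2*π)) * ∑ i ∈ Finset.range n, (v^2)^(n-1-i) * (2*π*catalanTriangle i i * (v-1)^(i+1))
        = KMA (n-1) v := by
      rw [KMA_eq, show (n-1)+1 = n from by omega]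
      have : ∀ i ∈ Finset.range n, (v/(2*π)) * ((v^2)^(n-1-i) * (2*π*catalanTriangle i i * (v-1)^(i+1)))
          = catalanTriangle i i * (v-1)^(i+1) * v^(2*((n-1)-i)+1) := by
        intro i hi
        simp only [Finset.mem_range] at hi
        rw [show v^(2*((n-1)-i)+1) = (v^2)^((n-1)-i) * v from by rw [pow_succ, pow_mul]]
        field_simp
      rw [Finset.mul_sum, Finset.sum_congr rfl this, show 2*(n-1)+2 = 2*n from by omega]
      have hc : v^(2*n) * (v/(2*π)) * (2*π/v) = v^(2*n) := by
        field_simp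
      rw [hc]
    rw [halg]
    -- KMA to the Icc sum
    rw [show KMA (n-1) v = ∑ m ∈ Finset.range n, catalanTriangle (n-1) m * v^(n-m) * (v-1)^m from by
      unfold KMA
      rw [show (n-1)+1 = n from by omega]]
    refine (Finset.sum_nbij' (i := fun j => n - j) (j := fun m => n - m) ?_ ?_ ?_ ?_ ?_).symm
    · intro a ha; simp only [Finset.mem_Icc] at ha; simp only [Finset.mem_range]; omega
    · intro a ha; simp only [Finset.mem_range] at ha; simp only [Finset.mem_Icc]; omega
    · intro a ha; simp only [Finset.mem_Icc] at ha; omega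
    · intro a ha; simp only [Finset.mem_range] at ha; omega
    · intro a ha
      simp only [Finset.mem_Icc] at ha
      rw [show n - (n - a) = a from by omega]
end

section
/- Fix p ∈ (0,1) and k ∈ ℕ. Let S be an n×n symmetric conference matrix, let F be a real n×n matrix with FᵀF = I + (1/√n) S, let 𝓘 ⊆ [n] be a random subset in which each element of [n] is included independently with probability p, let P := diag(1_{1∈𝓘}, ..., 1_{n∈𝓘}), and let X be the principal submatrix of S indexed by 𝓘. Then there exists a constant c(p,k) > 0, depending only on p and k, such that Var( tr( ((1/(p√n)) X)^k ) ) ≤ c(p,k) · ( max_{j ∈ [k]} Var( ‖FP‖_{S^{2j}}^{2j} ) + n^{1/2} ), where ‖FP‖_{S^{2j}}^{2j} = tr( (P Fᵀ F P)^j ) is the 2j-th power of the Schatten (2j)-norm of FP. -/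
open MeasureTheory ProbabilityTheory Filter Finset
open scoped ENNReal

instance bernoulliPi_prob (n : ℕ) (p : ℝ≥0∞) (hp : p ≤ 1) :
    IsProbabilityMeasure (bernoulliPi n p hp) := by
  unfold bernoulliPi; infer_instance

/-! ### Binomial-inversion coefficients -/

noncomputable def bcoef (k : ℕ) : ℕ → ℝ := fun j =>
  (if j = k then 1 else 0) - (if j = 1 then 1 else 0) -
    ∑ i ∈ (Finset.Icc 1 (k - 1)).attach, (k.choose i.1 : ℝ) * bcoef i.1 j
  termination_by k
  decreasing_by
    have hi := i.2
    simp only [Finset.mem_Icc] at hi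
    omega

lemma bcoef_apply (k j : ℕ) : bcoef k j =
    (if j = k then 1 else 0) - (if j = 1 then 1 else 0) -
      ∑ i ∈ Finset.Icc 1 (k - 1), (k.choose i : ℝ) * bcoef i j := by
  rw [bcoef]
  congr 1
  exact Finset.sum_attach (Finset.Icc 1 (k - 1)) (fun i => (k.choose i : ℝ) * bcoef i j)

lemma bcoef_eq_zero : ∀ k, ∀ j : ℕ, 0 < k → k < j → bcoef k j = 0 := by
  intro k
  induction k using Nat.strong_induction_on with
  | _ k IH =>
    intro j hk hkj
    rw [bcoef_apply]
    have h1 : ¬ (j = k) := by omega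
    have h2 : ¬ (j = 1) := by omega
    rw [if_neg h1, if_neg h2, Finset.sum_eq_zero, sub_zero, sub_zero]
    intro i hi
    simp only [Finset.mem_Icc] at hi
    rw [IH i (by omega) j (by omega) (by omega), mul_zero]

lemma bcoef_invert (T f : ℕ → ℝ)
    (hT : ∀ j, 1 ≤ j → T j = T 1 + ∑ i ∈ Finset.Icc 1 j, (j.choose i : ℝ) * f i) :
    ∀ k, 1 ≤ k → f k = ∑ j ∈ Finset.Icc 1 k, bcoef k j * T j := by
  intro k
  induction k using Nat.strong_induction_on with
  | _ k IH =>
    intro hk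
    obtain ⟨m, rfl⟩ : ∃ m, k = m + 1 := ⟨k - 1, by omega⟩
    have hsplit : T (m+1) = T 1 + ((∑ i ∈ Finset.Icc 1 m, ((m+1).choose i : ℝ) * f i)
        + ((m+1).choose (m+1) : ℝ) * f (m+1)) := by
      rw [hT (m+1) hk, Finset.sum_Icc_succ_top (by omega)]
    have hsum : ∀ i ∈ Finset.Icc 1 m,
        (((m+1).choose i : ℝ)) * f i
          = ((m+1).choose i : ℝ) * ∑ j ∈ Finset.Icc 1 (m+1), bcoef i j * T j := by
      intro i hi
      simp only [Finset.mem_Icc] at hi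
      congr 1
      rw [IH i (by omega) hi.1]
      apply Finset.sum_subset (Finset.Icc_subset_Icc_right (by omega))
      intro j hj hj'
      simp only [Finset.mem_Icc] at hj hj'
      rw [bcoef_eq_zero i j (by omega) (by omega), zero_mul]
    have hrhs : ∑ j ∈ Finset.Icc 1 (m+1), bcoef (m+1) j * T j
        = T (m+1) - T 1 - ∑ i ∈ Finset.Icc 1 m, ((m+1).choose i : ℝ)
            * ∑ j ∈ Finset.Icc 1 (m+1), bcoef i j * T j := by
      have expand : ∀ j ∈ Finset.Icc 1 (m+1), bcoef (m+1) j * T j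
          = (if j = m+1 then T j else 0) - (if j = 1 then T j else 0)
            - ∑ i ∈ Finset.Icc 1 m, ((m+1).choose i : ℝ) * (bcoef i j * T j) := by
        intro j _
        rw [bcoef_apply]
        simp only [Nat.add_sub_cancel, sub_mul, Finset.sum_mul, ite_mul, one_mul,
          zero_mul, mul_assoc]
      rw [Finset.sum_congr rfl expand]
      rw [Finset.sum_sub_distrib, Finset.sum_sub_distrib]
      rw [Finset.sum_ite_eq' (Finset.Icc 1 (m+1)) (m+1) T,
        Finset.sum_ite_eq' (Finset.Icc 1 (m+1)) 1 T]
      rw [if_pos (by simp [Finset.mem_Icc]), if_pos (by simp [Finset.mem_Icc])]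
      rw [Finset.sum_comm]
      congr 1
      apply Finset.sum_congr rfl
      intro i _
      rw [Finset.mul_sum]
    rw [hrhs, ← Finset.sum_congr rfl hsum]
    rw [Nat.choose_self] at hsplit
    push_cast at hsplit
    linarith

/-! ### Matrix lemmas: binomial expansion of `tr((P(1+aS)P)^j)` -/

section Mat
variable {n : ℕ} (P S : Matrix (Fin n) (Fin n) ℝ)

lemma hPM (hP2 : P * P = P) : P * (P * S * P) = P * S * P := by
  rw [← Matrix.mul_assoc, ← Matrix.mul_assoc, hP2]

lemma hMP (hP2 : P * P = P) : (P * S * P) * P = P * S * P := by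
  rw [Matrix.mul_assoc, hP2]

lemma hPpow (hP2 : P * P = P) : ∀ m, 1 ≤ m → P ^ m = P := by
  intro m hm
  induction m with
  | zero => omega
  | succ l ih =>
    rcases Nat.lt_or_ge l 1 with h | h
    · interval_cases l
      · simp
    · rw [pow_succ, ih h, hP2]

lemma hMpowP (hP2 : P * P = P) : ∀ m, 1 ≤ m → (P * S * P) ^ m * P = (P * S * P) ^ m := by
  intro m _
  obtain ⟨l, rfl⟩ : ∃ l, m = l + 1 := ⟨m - 1, by omega⟩
  rw [pow_succ, Matrix.mul_assoc, hMP P S hP2]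

lemma trace_expand (hP2 : P * P = P) (a : ℝ) (j : ℕ) (hj : 1 ≤ j) :
    Matrix.trace ((P * (1 + a • S) * P) ^ j)
      = Matrix.trace P + ∑ i ∈ Finset.Icc 1 j,
          (j.choose i : ℝ) * (a ^ i * Matrix.trace ((P * S * P) ^ i)) := by
  have hPAP : P * (1 + a • S) * P = a • (P * S * P) + P := by
    rw [Matrix.mul_add, Matrix.mul_one, Matrix.add_mul, hP2, Matrix.mul_smul, Matrix.smul_mul,
      Matrix.mul_assoc]
    abel
  have h0 : Commute (P * S * P) P := by
    unfold Commute SemiconjBy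
    rw [hMP P S hP2, hPM P S hP2]
  have hcomm : Commute (a • (P * S * P)) P := h0.smul_left a
  rw [hPAP, hcomm.add_pow j, Matrix.trace_sum]
  have hrange : Finset.range (j + 1) = insert 0 (Finset.Icc 1 j) := by
    ext x
    simp only [Finset.mem_range, Finset.mem_insert, Finset.mem_Icc]
    omega
  rw [hrange, Finset.sum_insert (by simp)]
  congr 1
  · rw [pow_zero, one_mul, Nat.sub_zero, hPpow P hP2 j hj, Nat.choose_zero_right, Nat.cast_one,
      mul_one]
  · apply Finset.sum_congr rfl
    intro i hi
    simp only [Finset.mem_Icc] at hi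
    have hMi : (P * S * P) ^ i * P ^ (j - i) = (P * S * P) ^ i := by
      rcases Nat.eq_or_lt_of_le hi.2 with h | h
      · rw [h, Nat.sub_self, pow_zero, mul_one]
      · rw [hPpow P hP2 (j - i) (by omega), hMpowP P S hP2 i hi.1]
    rw [smul_pow, Matrix.smul_mul, hMi, Matrix.smul_mul]
    have hc : (P * S * P) ^ i * ((j.choose i : ℕ) : Matrix (Fin n) (Fin n) ℝ)
        = (j.choose i : ℕ) • ((P * S * P) ^ i) := by
      rw [← (Nat.cast_commute (j.choose i) ((P * S * P) ^ i)).eq, ← nsmul_eq_mul]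
    rw [hc, Matrix.trace_smul, Matrix.trace_smul]
    simp only [smul_eq_mul, nsmul_eq_mul]
    ring

end Mat

section Diag
variable {n : ℕ} (S : Matrix (Fin n) (Fin n) ℝ) (ω : Fin n → Bool)

lemma diagP_sq :
    (Matrix.diagonal fun i => if ω i then (1:ℝ) else 0)
      * (Matrix.diagonal fun i => if ω i then (1:ℝ) else 0)
      = (Matrix.diagonal fun i => if ω i then (1:ℝ) else 0) := by
  rw [Matrix.diagonal_mul_diagonal]
  have : (fun i => (if ω i = true then (1:ℝ) else 0) * (if ω i = true then 1 else 0))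
      = (fun i => if ω i = true then (1:ℝ) else 0) :=
    funext fun i => by by_cases h : ω i <;> simp [h]
  rw [this]

lemma traceM_zero (hd : ∀ i, S i i = 0) :
    Matrix.trace ((Matrix.diagonal fun i => if ω i then (1:ℝ) else 0) * S
      * (Matrix.diagonal fun i => if ω i then (1:ℝ) else 0)) = 0 := by
  simp [Matrix.trace, Matrix.diag, Matrix.mul_diagonal, Matrix.diagonal_mul, hd]

/-- The inclusion matrix of the subset `{i | ω i}`. -/
def Emat (ω : Fin n → Bool) : Matrix (Fin n) {i : Fin n // ω i = true} ℝ :=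
  Matrix.of fun i j => if i = (j : Fin n) then 1 else 0

lemma Emat_tmul : (Emat ω).transpose * Emat ω = 1 := by
  ext u v
  simp only [Matrix.mul_apply, Matrix.transpose_apply, Emat, Matrix.of_apply, Matrix.one_apply]
  rw [Finset.sum_eq_single ((u : Fin n))]
  · have : ((u : Fin n) = (v : Fin n)) ↔ (u = v) := Subtype.val_inj
    simp [this]
  · intro b _ hb
    simp [hb]
  · simp

lemma Emat_StS : (Emat ω).transpose * S * Emat ω = subMat S ω := by
  ext u v
  simp only [Matrix.mul_apply, Matrix.transpose_apply, Emat, Matrix.of_apply, subMat,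
    Matrix.submatrix_apply, ite_mul, mul_ite, one_mul, mul_one, zero_mul, mul_zero,
    Finset.sum_ite_eq', Finset.mem_univ, if_true]

lemma Emat_mul_t : Emat ω * (Emat ω).transpose
    = (Matrix.diagonal fun i => if ω i then (1:ℝ) else 0) := by
  ext a b
  simp only [Matrix.mul_apply, Matrix.transpose_apply, Emat, Matrix.of_apply,
    Matrix.diagonal_apply]
  by_cases ha : ω a = true
  · rw [Finset.sum_eq_single (⟨a, ha⟩ : {i : Fin n // ω i = true})]
    · by_cases hab : a = b
      · subst hab; simp [ha]
      · simp [hab, Ne.symm hab]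
    · intro u _ hu
      have hne : a ≠ (u : Fin n) := fun h => hu (Subtype.ext h.symm)
      simp [hne]
    · simp
  · rw [Finset.sum_eq_zero]
    · simp [ha]
    · intro u _
      have hne : a ≠ (u : Fin n) := fun h => ha (h ▸ u.2)
      simp [hne]

lemma M_pow_eq (m : ℕ) (hm : 1 ≤ m) :
    ((Matrix.diagonal fun i => if ω i then (1:ℝ) else 0) * S
      * (Matrix.diagonal fun i => if ω i then (1:ℝ) else 0)) ^ m
    = Emat ω * (subMat S ω) ^ m * (Emat ω).transpose := by
  have hM : (Matrix.diagonal fun i => if ω i then (1:ℝ) else 0) * S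
      * (Matrix.diagonal fun i => if ω i then (1:ℝ) else 0)
      = Emat ω * subMat S ω * (Emat ω).transpose := by
    rw [← Emat_StS S ω, ← Emat_mul_t ω]
    simp only [Matrix.mul_assoc]
  induction m with
  | zero => omega
  | succ l ih =>
    rcases Nat.lt_or_ge l 1 with h | h
    · interval_cases l
      · rw [pow_one, pow_one, hM]
    · rw [pow_succ, ih h, hM, pow_succ]
      calc Emat ω * (subMat S ω) ^ l * (Emat ω).transpose
            * (Emat ω * subMat S ω * (Emat ω).transpose)
          = Emat ω * (subMat S ω) ^ l * (((Emat ω).transpose * Emat ω) * subMat S ω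
              * (Emat ω).transpose) := by simp only [Matrix.mul_assoc]
        _ = Emat ω * ((subMat S ω) ^ l * subMat S ω) * (Emat ω).transpose := by
              rw [Emat_tmul, Matrix.one_mul]; simp only [Matrix.mul_assoc]

lemma trace_sub_eq (m : ℕ) (hm : 1 ≤ m) :
    Matrix.trace (((Matrix.diagonal fun i => if ω i then (1:ℝ) else 0) * S
      * (Matrix.diagonal fun i => if ω i then (1:ℝ) else 0)) ^ m)
    = Matrix.trace ((subMat S ω) ^ m) := by
  rw [M_pow_eq S ω m hm, Matrix.mul_assoc, Matrix.trace_mul_comm, Matrix.mul_assoc, Emat_tmul,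
    Matrix.mul_one]

end Diag

/-! ### Variance lemmas on a finite space -/

section Var
variable {Ω : Type*} [Fintype Ω] [Nonempty Ω] [MeasurableSpace Ω] [MeasurableSingletonClass Ω]
variable (μ : Measure Ω) [IsProbabilityMeasure μ]

lemma memL2 (f : Ω → ℝ) : MeasureTheory.MemLp f 2 μ := by
  have hb : ∀ ω, ‖f ω‖ ≤ Finset.univ.sup' Finset.univ_nonempty fun ω => ‖f ω‖ := fun ω =>
    Finset.le_sup' (f := fun ω => ‖f ω‖) (Finset.mem_univ ω)
  exact (memLp_top_of_bound (measurable_of_countable f).aestronglyMeasurable _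
    (Filter.Eventually.of_forall hb)).mono_exponent le_top

lemma var_sum_le (k : ℕ) (hk : 0 < k) (d : ℕ → ℝ) (T : ℕ → Ω → ℝ) :
    variance (fun ω => ∑ j ∈ Finset.Icc 1 k, d j * T j ω) μ
      ≤ (k * ∑ j ∈ Finset.Icc 1 k, (d j) ^ 2)
        * (Finset.Icc 1 k).sup' (Finset.nonempty_Icc.mpr hk) (fun j => variance (T j) μ) := by
  set m : ℕ → ℝ := fun j => ∫ ω, T j ω ∂μ with hm
  have hint : ∀ g : Ω → ℝ, Integrable g μ := fun g => .of_finite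
  have hEg : (∫ ω, (∑ j ∈ Finset.Icc 1 k, d j * T j ω) ∂μ)
      = ∑ j ∈ Finset.Icc 1 k, d j * m j := by
    rw [integral_finset_sum _ fun j _ => (hint _)]
    exact Finset.sum_congr rfl fun j _ => integral_const_mul (d j) (T j)
  have hvar : variance (fun ω => ∑ j ∈ Finset.Icc 1 k, d j * T j ω) μ
      = ∫ ω, (∑ j ∈ Finset.Icc 1 k, d j * (T j ω - m j)) ^ 2 ∂μ := by
    rw [variance_eq_integral (measurable_of_countable _).aemeasurable]
    congr 1
    funext ω
    simp only [Pi.pow_apply, Pi.sub_apply, hEg]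
    rw [← Finset.sum_sub_distrib]
    congr 1
    exact Finset.sum_congr rfl fun j _ => by ring
  have hptwise : ∀ ω, (∑ j ∈ Finset.Icc 1 k, d j * (T j ω - m j)) ^ 2
      ≤ (k : ℝ) * ∑ j ∈ Finset.Icc 1 k, (d j * (T j ω - m j)) ^ 2 := by
    intro ω
    have := sq_sum_le_card_mul_sum_sq (s := Finset.Icc 1 k)
      (f := fun j => d j * (T j ω - m j))
    simpa [Nat.card_Icc] using this
  have hvarj : ∀ j, (∫ ω, (T j ω - m j) ^ 2 ∂μ) = variance (T j) μ := by
    intro j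
    rw [variance_eq_integral (measurable_of_countable (T j)).aemeasurable]
  calc variance (fun ω => ∑ j ∈ Finset.Icc 1 k, d j * T j ω) μ
      ≤ ∫ ω, (k : ℝ) * ∑ j ∈ Finset.Icc 1 k, (d j * (T j ω - m j)) ^ 2 ∂μ := by
        rw [hvar]; exact integral_mono (hint _) (hint _) hptwise
    _ = (k : ℝ) * ∑ j ∈ Finset.Icc 1 k, (d j) ^ 2 * variance (T j) μ := by
        rw [integral_const_mul, integral_finset_sum _ fun j _ => (hint _)]
        congr 1
        refine Finset.sum_congr rfl fun j _ => ?_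
        rw [← hvarj j, ← integral_const_mul]
        congr 1
        funext ω
        ring
    _ ≤ (k : ℝ) * ∑ j ∈ Finset.Icc 1 k, (d j) ^ 2
          * (Finset.Icc 1 k).sup' (Finset.nonempty_Icc.mpr hk) (fun j => variance (T j) μ) := by
        gcongr with j hj
        exact Finset.le_sup' (f := fun j => variance (T j) μ) hj
    _ = (k * ∑ j ∈ Finset.Icc 1 k, (d j) ^ 2)
        * (Finset.Icc 1 k).sup' (Finset.nonempty_Icc.mpr hk) (fun j => variance (T j) μ) := by
        rw [← Finset.sum_mul, mul_assoc]
end Var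

/-- The variance of `tr((1/(p√n) X)^k)` is controlled, up to a constant
`c(p,k)` and an additive `√n`, by the maximal variance of the Schatten-norm powers
`‖FP‖_{S^{2j}}^{2j} = tr((P Fᵀ F P)^j)` for `j ∈ [k]`. -/
theorem stmt10 (p : ℝ) (hp0 : 0 < p) (hp1 : p < 1) (k : ℕ) (hk : 0 < k) :
    ∃ c > (0 : ℝ), ∀ (n : ℕ) (S F : Matrix (Fin n) (Fin n) ℝ),
      IsConferenceMatrix S →
      F.transpose * F = 1 + (Real.sqrt n)⁻¹ • S →
      let μ := bernoulliPi n (ENNReal.ofReal p) (ENNReal.ofReal_le_one.mpr hp1.le)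
      let P := fun ω : Fin n → Bool =>
        (Matrix.diagonal fun i => if ω i then (1 : ℝ) else 0)
      variance (fun ω => Matrix.trace (((1 / (p * Real.sqrt n)) • subMat S ω) ^ k)) μ ≤
        c * ((Finset.Icc 1 k).sup' (Finset.nonempty_Icc.mpr hk)
            (fun j => variance
              (fun ω => Matrix.trace ((P ω * (F.transpose * F) * P ω) ^ j)) μ)
          + Real.sqrt n) := by
  classical
  set d : ℕ → ℝ := fun j => (p⁻¹) ^ k * bcoef k j with hd
  have hc0 : (0:ℝ) ≤ k * ∑ j ∈ Finset.Icc 1 k, (d j) ^ 2 := by positivity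
  refine ⟨(k * ∑ j ∈ Finset.Icc 1 k, (d j) ^ 2) + 1, by linarith, ?_⟩
  intro n S F hS hF μ P
  haveI hprob : IsProbabilityMeasure μ := bernoulliPi_prob n _ _
  have hPdef : P = fun ω : Fin n → Bool =>
      (Matrix.diagonal fun i => if ω i then (1 : ℝ) else 0) := rfl
  set a : ℝ := (Real.sqrt n)⁻¹ with ha
  set T : ℕ → (Fin n → Bool) → ℝ := fun j ω =>
    Matrix.trace ((P ω * (F.transpose * F) * P ω) ^ j) with hT
  -- the pointwise identity
  have hfun : (fun ω => Matrix.trace (((1 / (p * Real.sqrt n)) • subMat S ω) ^ k))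
      = fun ω => ∑ j ∈ Finset.Icc 1 k, d j * T j ω := by
    funext ω
    have hP2 : P ω * P ω = P ω := diagP_sq ω
    have htrM : Matrix.trace (P ω * S * P ω) = 0 := traceM_zero S ω hS.2.1
    have hT1 : T 1 ω = Matrix.trace (P ω) := by
      rw [hT]
      simp only [hF]
      rw [trace_expand (P ω) S hP2 a 1 le_rfl]
      simp [htrM]
    have hTj : ∀ j, 1 ≤ j → T j ω = T 1 ω + ∑ i ∈ Finset.Icc 1 j, (j.choose i : ℝ) *
        (a ^ i * Matrix.trace ((P ω * S * P ω) ^ i)) := by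
      intro j hj
      rw [hT1, hT]
      simp only [hF]
      exact trace_expand (P ω) S hP2 a j hj
    have hinv : a ^ k * Matrix.trace ((P ω * S * P ω) ^ k)
        = ∑ j ∈ Finset.Icc 1 k, bcoef k j * T j ω := bcoef_invert (fun j => T j ω)
      (fun i => a ^ i * Matrix.trace ((P ω * S * P ω) ^ i)) hTj k hk
    have hsub : Matrix.trace (((1 / (p * Real.sqrt n)) • subMat S ω) ^ k)
        = (p⁻¹) ^ k * (a ^ k * Matrix.trace ((P ω * S * P ω) ^ k)) := by
      rw [smul_pow, Matrix.trace_smul, smul_eq_mul, hPdef]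
      rw [trace_sub_eq S ω k hk]
      rw [one_div, mul_inv, mul_pow, ← ha, mul_assoc]
    rw [hsub, hinv, Finset.mul_sum]
    exact Finset.sum_congr rfl fun j _ => by rw [hd]; ring
  rw [hfun]
  have hkey := var_sum_le μ k hk d T
  set sup := (Finset.Icc 1 k).sup' (Finset.nonempty_Icc.mpr hk) (fun j => variance (T j) μ)
    with hsup
  have hsupnn : 0 ≤ sup := by
    rw [hsup]
    exact le_trans (variance_nonneg (T k) μ)
      (Finset.le_sup' (f := fun j => variance (T j) μ) (by simp [Finset.mem_Icc]; omega))
  have hsqrt : 0 ≤ Real.sqrt n := Real.sqrt_nonneg n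
  nlinarith [hkey]
end
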